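/- arXiv:1801.05654 — 2 statements merged into one kernel-verified Lean document; each statement's English description precedes it below -/
import Mathlib

section
/- Define the fourth-order Fourier coefficients C_{j_4 j_3 j_2 j_1} = ∫_t^T φ_{j_4}(s_4) ∫_t^{s_4} φ_{j_3}(s_3) ∫_t^{s_3} φ_{j_2}(s_2) ∫_t^{s_2} φ_{j_1}(s_1) ds_1 ds_2 ds_3 ds_4 with respect to the orthonormal Legendre system. Then lim_{p → ∞} Σ_{j_4=0}^{p} Σ_{j_1=0}^{p} C_{j_4 j_4 j_1 j_1} = (T − t)² / 8. -/
open MeasureTheory Filter Finset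

/-- Legendre polynomials via the three-term recurrence
`(n+2) P_{n+2}(x) = (2n+3) x P_{n+1}(x) - (n+1) P_n(x)`, with `P_0 = 1`, `P_1 = x`. -/
noncomputable def legendreP : ℕ → ℝ → ℝ
  | 0 => fun _ => 1
  | 1 => fun x => x
  | n + 2 => fun x =>
      ((2 * (n : ℝ) + 3) * x * legendreP (n + 1) x - ((n : ℝ) + 1) * legendreP n x) / ((n : ℝ) + 2)

/-- The orthonormal Legendre system on `[t, T]`. -/
noncomputable def legendreSys (t T : ℝ) (j : ℕ) (x : ℝ) : ℝ :=
  Real.sqrt ((2 * (j : ℝ) + 1) / (T - t)) * legendreP j ((2 * x - T - t) / (T - t))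

/-- The trigonometric orthonormal system on `[t, T]`. -/
noncomputable def trigSys (t T : ℝ) (j : ℕ) (x : ℝ) : ℝ :=
  if j = 0 then 1 / Real.sqrt (T - t)
  else if j % 2 = 1 then
    Real.sqrt (2 / (T - t)) * Real.sin (2 * Real.pi * (((j + 1) / 2 : ℕ) : ℝ) * (x - t) / (T - t))
  else
    Real.sqrt (2 / (T - t)) * Real.cos (2 * Real.pi * ((j / 2 : ℕ) : ℝ) * (x - t) / (T - t))

/-- Double Fourier coefficient `C_{j₂ j₁}`. -/
noncomputable def C2 (t T : ℝ) (φ : ℕ → ℝ → ℝ) (ψ1 ψ2 : ℝ → ℝ) (j2 j1 : ℕ) : ℝ :=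
  ∫ s2 in t..T, ψ2 s2 * φ j2 s2 * ∫ s1 in t..s2, ψ1 s1 * φ j1 s1

/-- Triple Fourier coefficient `C_{j₃ j₂ j₁}`. -/
noncomputable def C3 (t T : ℝ) (φ : ℕ → ℝ → ℝ) (ψ1 ψ2 ψ3 : ℝ → ℝ) (j3 j2 j1 : ℕ) : ℝ :=
  ∫ s3 in t..T, ψ3 s3 * φ j3 s3 *
    ∫ s2 in t..s3, ψ2 s2 * φ j2 s2 * ∫ s1 in t..s2, ψ1 s1 * φ j1 s1

/-- Fourth-order Fourier coefficient `C_{j₄ j₃ j₂ j₁}` (with `ψ_l ≡ 1`). -/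
noncomputable def C4 (t T : ℝ) (φ : ℕ → ℝ → ℝ) (j4 j3 j2 j1 : ℕ) : ℝ :=
  ∫ s4 in t..T, φ j4 s4 * ∫ s3 in t..s4, φ j3 s3 *
    ∫ s2 in t..s3, φ j2 s2 * ∫ s1 in t..s2, φ j1 s1


/-- Derivative of Legendre polynomials, via differentiated recurrence. -/
noncomputable def legD : ℕ → ℝ → ℝ
  | 0 => fun _ => 0
  | 1 => fun _ => 1
  | n + 2 => fun x =>
      ((2 * (n : ℝ) + 3) * (legendreP (n + 1) x + x * legD (n + 1) x) - ((n : ℝ) + 1) * legD n x) /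
        ((n : ℝ) + 2)

lemma legendreP_succ_succ (n : ℕ) (x : ℝ) :
    legendreP (n + 2) x =
      ((2 * (n : ℝ) + 3) * x * legendreP (n + 1) x - ((n : ℝ) + 1) * legendreP n x) /
        ((n : ℝ) + 2) := rfl

lemma legendreP_succ_succ' (n : ℕ) :
    legendreP (n + 2) = fun x =>
      ((2 * (n : ℝ) + 3) * x * legendreP (n + 1) x - ((n : ℝ) + 1) * legendreP n x) /
        ((n : ℝ) + 2) := rfl

lemma legD_succ_succ (n : ℕ) (x : ℝ) :
    legD (n + 2) x =
      ((2 * (n : ℝ) + 3) * (legendreP (n + 1) x + x * legD (n + 1) x) - ((n : ℝ) + 1) * legD n x) /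
        ((n : ℝ) + 2) := rfl

lemma legD_succ_succ' (n : ℕ) :
    legD (n + 2) = fun x =>
      ((2 * (n : ℝ) + 3) * (legendreP (n + 1) x + x * legD (n + 1) x) - ((n : ℝ) + 1) * legD n x) /
        ((n : ℝ) + 2) := rfl

lemma continuous_legendreP (n : ℕ) : Continuous (legendreP n) := by
  induction n using Nat.strong_induction_on with
  | _ n ih =>
    match n with
    | 0 => exact continuous_const
    | 1 => exact continuous_id
    | (m + 2) =>
      have h1 := ih (m + 1) (by omega)
      have h0 := ih m (by omega)
      rw [legendreP_succ_succ']
      fun_prop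

lemma continuous_legD (n : ℕ) : Continuous (legD n) := by
  induction n using Nat.strong_induction_on with
  | _ n ih =>
    match n with
    | 0 => exact continuous_const
    | 1 => exact continuous_const
    | (m + 2) =>
      have h1 := ih (m + 1) (by omega)
      have h0 := ih m (by omega)
      have := continuous_legendreP (m + 1)
      rw [legD_succ_succ']
      fun_prop

lemma hasDerivAt_legendreP (n : ℕ) (x : ℝ) : HasDerivAt (legendreP n) (legD n x) x := by
  induction n using Nat.strong_induction_on with
  | _ n ih =>
    match n with
    | 0 => simpa [legendreP, legD] using hasDerivAt_const x (1:ℝ)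
    | 1 => simpa [legendreP, legD] using hasDerivAt_id' x
    | (m + 2) =>
      have h1 := ih (m + 1) (by omega)
      have h0 := ih m (by omega)
      have hx : HasDerivAt (fun y : ℝ => (2 * (m:ℝ) + 3) * y * legendreP (m+1) y)
          ((2 * (m:ℝ) + 3) * (legendreP (m+1) x + x * legD (m+1) x)) x := by
        have := ((hasDerivAt_id x).fun_mul h1).const_mul (2 * (m:ℝ) + 3)
        convert this using 1
        all_goals first
        | (ext y; simp only [id_eq]; try ring)
        | (simp only [id_eq, one_mul]; try ring)
      have h2 : HasDerivAt (fun y : ℝ => ((m:ℝ)+1) * legendreP m y) (((m:ℝ)+1) * legD m x) x :=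
        h0.const_mul _
      have := (hx.fun_sub h2).div_const ((m:ℝ) + 2)
      rw [legendreP_succ_succ', legD_succ_succ]; exact this

lemma legendreP_one (n : ℕ) : legendreP n 1 = 1 := by
  induction n using Nat.strong_induction_on with
  | _ n ih =>
    match n with
    | 0 => rfl
    | 1 => rfl
    | (m + 2) =>
      have h1 := ih (m + 1) (by omega)
      have h0 := ih m (by omega)
      rw [legendreP_succ_succ, h1, h0]
      have : (m:ℝ) + 2 ≠ 0 := by positivity
      field_simp
      ring

lemma legendreP_neg_one (n : ℕ) : legendreP n (-1) = (-1 : ℝ) ^ n := by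
  induction n using Nat.strong_induction_on with
  | _ n ih =>
    match n with
    | 0 => rfl
    | 1 => simp [legendreP]
    | (m + 2) =>
      have h1 := ih (m + 1) (by omega)
      have h0 := ih m (by omega)
      rw [legendreP_succ_succ, h1, h0]
      have : (m:ℝ) + 2 ≠ 0 := by positivity
      field_simp
      ring

/-- The identity `x P'_{n+1} = P'_n + (n+1) P_{n+1}`. -/
lemma legC (n : ℕ) (x : ℝ) :
    x * legD (n + 1) x = legD n x + ((n : ℝ) + 1) * legendreP (n + 1) x := by
  induction n using Nat.strong_induction_on with
  | _ n ih =>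
    match n with
    | 0 => simp [legendreP, legD]
    | 1 =>
      simp only [legendreP, legD]
      norm_num
      ring
    | (m + 2) =>
      have c1 := ih (m + 1) (by omega)
      have c0 := ih m (by omega)
      have e1 : m + 1 + 1 = m + 2 := rfl
      have e2 : m + 1 + 2 = m + 3 := rfl
      rw [e1] at c1
      push_cast at c1
      have hm2 : (m:ℝ) + 2 ≠ 0 := by positivity
      have hm3 : (m:ℝ) + 3 ≠ 0 := by positivity
      have d3' : ((m:ℝ) + 3) * legD (m + 3) x =
          (2 * (m:ℝ) + 5) * (legendreP (m + 2) x + x * legD (m + 2) x) -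
            ((m:ℝ) + 2) * legD (m + 1) x := by
        have h := legD_succ_succ (m + 1) x
        rw [e1, e2] at h
        rw [h]
        push_cast
        field_simp
        ring
      have d2' : ((m:ℝ) + 2) * legD (m + 2) x =
          (2 * (m:ℝ) + 3) * (legendreP (m + 1) x + x * legD (m + 1) x) -
            ((m:ℝ) + 1) * legD m x := by
        rw [legD_succ_succ]
        field_simp
      have p3' : ((m:ℝ) + 3) * legendreP (m + 3) x =
          (2 * (m:ℝ) + 5) * x * legendreP (m + 2) x - ((m:ℝ) + 2) * legendreP (m + 1) x := by
        have h := legendreP_succ_succ (m + 1) x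
        rw [e1, e2] at h
        rw [h]
        push_cast
        field_simp
        ring
      have hB : legD (m + 2) x = legD m x + (2 * (m:ℝ) + 3) * legendreP (m + 1) x := by
        refine mul_left_cancel₀ hm2 ?_
        linear_combination d2' + (2*(m:ℝ)+3) * c0
      push_cast
      refine mul_left_cancel₀ hm3 ?_
      linear_combination x * d3' - ((m:ℝ)+3) * p3' + ((2*(m:ℝ)+5)*x) * c1
        + ((m:ℝ)+3) * c0 - ((m:ℝ)+3) * hB

/-- The identity `P'_{n+2} = P'_n + (2n+3) P_{n+1}`. -/
lemma legB (n : ℕ) (x : ℝ) :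
    legD (n + 2) x = legD n x + (2 * (n : ℝ) + 3) * legendreP (n + 1) x := by
  have c0 := legC n x
  have d2' : ((n:ℝ) + 2) * legD (n + 2) x =
      (2 * (n:ℝ) + 3) * (legendreP (n + 1) x + x * legD (n + 1) x) -
        ((n:ℝ) + 1) * legD n x := by
    rw [legD_succ_succ]
    have : (n:ℝ) + 2 ≠ 0 := by positivity
    field_simp
  have hn2 : (n:ℝ) + 2 ≠ 0 := by positivity
  refine mul_left_cancel₀ hn2 ?_
  linear_combination d2' + (2*(n:ℝ)+3) * c0

lemma legendreP_intervalIntegrable (n : ℕ) (a b : ℝ) :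
    IntervalIntegrable (legendreP n) volume a b :=
  (continuous_legendreP n).intervalIntegrable a b

/-- Antiderivative of `P_{k+1}`. -/
noncomputable def legR (k : ℕ) (x : ℝ) : ℝ :=
  (legendreP (k + 2) x - legendreP k x) / (2 * (k : ℝ) + 3)

lemma hasDerivAt_legR (k : ℕ) (x : ℝ) : HasDerivAt (legR k) (legendreP (k + 1) x) x := by
  have h := ((hasDerivAt_legendreP (k + 2) x).sub (hasDerivAt_legendreP k x)).div_const
    (2 * (k : ℝ) + 3)
  have h23 : 2 * (k:ℝ) + 3 ≠ 0 := by positivity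
  have : (legD (k + 2) x - legD k x) / (2 * (k:ℝ) + 3) = legendreP (k + 1) x := by
    rw [legB]
    field_simp
    ring
  rw [this] at h
  exact h

lemma legR_one (k : ℕ) : legR k 1 = 0 := by
  simp [legR, legendreP_one]

lemma legR_neg_one (k : ℕ) : legR k (-1) = 0 := by
  simp [legR, legendreP_neg_one, pow_succ]

lemma continuous_legR (k : ℕ) : Continuous (legR k) := by
  have h2 := continuous_legendreP (k + 2)
  have h0 := continuous_legendreP k
  unfold legR
  fun_prop

/-- Integration by parts step: if `∫ P'_m P_n = 0` for all relevant `n`, then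
`∫ P_m P_{k+1} = 0` for `m ≤ k`. -/
lemma ibpZ (m k : ℕ)
    (hW : ∀ n', m ≤ n' → ∫ x in (-1:ℝ)..1, legD m x * legendreP n' x = 0)
    (hmk : m ≤ k) :
    ∫ x in (-1:ℝ)..1, legendreP m x * legendreP (k + 1) x = 0 := by
  have hibp := intervalIntegral.integral_mul_deriv_eq_deriv_mul
    (u := legendreP m) (u' := legD m) (v := legR k) (v' := legendreP (k + 1))
    (a := (-1:ℝ)) (b := 1)
    (fun x _ => hasDerivAt_legendreP m x)
    (fun x _ => hasDerivAt_legR k x)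
    ((continuous_legD m).intervalIntegrable _ _)
    (legendreP_intervalIntegrable _ _ _)
  rw [hibp, legR_one, legR_neg_one]
  have hsplit : ∫ x in (-1:ℝ)..1, legD m x * legR k x =
      ((∫ x in (-1:ℝ)..1, legD m x * legendreP (k + 2) x) -
        ∫ x in (-1:ℝ)..1, legD m x * legendreP k x) / (2 * (k:ℝ) + 3) := by
    rw [eq_div_iff (by positivity : 2 * (k:ℝ) + 3 ≠ 0), ← intervalIntegral.integral_sub
      (((continuous_legD m).fun_mul (continuous_legendreP _)).intervalIntegrable _ _)
      (((continuous_legD m).fun_mul (continuous_legendreP _)).intervalIntegrable _ _),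
      ← intervalIntegral.integral_mul_const]
    apply intervalIntegral.integral_congr
    intro x _
    simp only [legR]
    field_simp
  rw [hsplit, hW (k + 2) (by omega), hW k hmk]
  ring

lemma intW : ∀ m n : ℕ, m ≤ n → ∫ x in (-1:ℝ)..1, legD m x * legendreP n x = 0 := by
  intro m
  induction m using Nat.strong_induction_on with
  | _ m ih =>
    match m with
    | 0 => intro n _; simp [legD]
    | 1 =>
      intro n hn
      obtain ⟨k, rfl⟩ : ∃ k, n = k + 1 := ⟨n - 1, by omega⟩
      have h := ibpZ 0 k (fun n' _ => by simp [legD]) (by omega)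
      have e : ∀ x : ℝ, legD 1 x * legendreP (k + 1) x =
          legendreP 0 x * legendreP (k + 1) x := by
        intro x; simp [legD, legendreP]
      calc ∫ x in (-1:ℝ)..1, legD 1 x * legendreP (k + 1) x
          = ∫ x in (-1:ℝ)..1, legendreP 0 x * legendreP (k + 1) x :=
            intervalIntegral.integral_congr (fun x _ => e x)
        _ = 0 := h
    | (m + 2) =>
      intro n hn
      obtain ⟨k, rfl⟩ : ∃ k, n = k + 1 := ⟨n - 1, by omega⟩
      have hZ := ibpZ (m + 1) k (fun n' h' => ih (m + 1) (by omega) n' h') (by omega)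
      have hW0 := ih m (by omega) (k + 1) (by omega)
      have hsplit : ∫ x in (-1:ℝ)..1, legD (m + 2) x * legendreP (k + 1) x =
          (∫ x in (-1:ℝ)..1, legD m x * legendreP (k + 1) x) +
            (2 * (m:ℝ) + 3) * ∫ x in (-1:ℝ)..1, legendreP (m + 1) x * legendreP (k + 1) x := by
        rw [← intervalIntegral.integral_const_mul, ← intervalIntegral.integral_add
          (((continuous_legD m).fun_mul (continuous_legendreP _)).intervalIntegrable _ _)
          ((continuous_const.fun_mul ((continuous_legendreP _).fun_mul
            (continuous_legendreP _))).intervalIntegrable _ _)]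
        apply intervalIntegral.integral_congr
        intro x _
        simp only []
        rw [legB]
        ring
      rw [hsplit, hZ, hW0]
      ring

lemma intZ (m n : ℕ) (h : m < n) : ∫ x in (-1:ℝ)..1, legendreP m x * legendreP n x = 0 := by
  obtain ⟨k, rfl⟩ : ∃ k, n = k + 1 := ⟨n - 1, by omega⟩
  exact ibpZ m k (fun n' h' => intW m n' h') (by omega)

lemma intX (n : ℕ) :
    (2 * (n:ℝ) + 3) * ∫ x in (-1:ℝ)..1, x * legendreP n x * legendreP (n + 1) x =
      ((n:ℝ) + 1) * ∫ x in (-1:ℝ)..1, legendreP n x ^ 2 := by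
  have h0 : ∫ x in (-1:ℝ)..1, legendreP n x * legendreP (n + 2) x = 0 := intZ n (n+2) (by omega)
  have hsplit : ∫ x in (-1:ℝ)..1, legendreP n x * legendreP (n + 2) x =
      ((2 * (n:ℝ) + 3) * (∫ x in (-1:ℝ)..1, x * legendreP n x * legendreP (n + 1) x) -
        ((n:ℝ) + 1) * ∫ x in (-1:ℝ)..1, legendreP n x ^ 2) / ((n:ℝ) + 2) := by
    rw [eq_div_iff (by positivity : (n:ℝ) + 2 ≠ 0),
      ← intervalIntegral.integral_const_mul, ← intervalIntegral.integral_const_mul,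
      ← intervalIntegral.integral_sub
        ((continuous_const.fun_mul ((continuous_id'.fun_mul (continuous_legendreP _)).fun_mul
          (continuous_legendreP _))).intervalIntegrable _ _)
        ((continuous_const.fun_mul ((continuous_legendreP _).fun_pow 2)).intervalIntegrable _ _),
      ← intervalIntegral.integral_mul_const]
    apply intervalIntegral.integral_congr
    intro x _
    simp only []
    rw [legendreP_succ_succ]
    have : (n:ℝ) + 2 ≠ 0 := by positivity
    field_simp
  rw [h0] at hsplit
  have := hsplit.symm
  rw [div_eq_iff (by positivity : (n:ℝ) + 2 ≠ 0)] at this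
  linarith [this]

lemma intJ (n : ℕ) : ∫ x in (-1:ℝ)..1, legendreP n x ^ 2 = 2 / (2 * (n:ℝ) + 1) := by
  induction n using Nat.strong_induction_on with
  | _ n ih =>
    match n with
    | 0 =>
      norm_num [legendreP]
    | 1 =>
      have : ∀ x : ℝ, legendreP 1 x ^ 2 = x ^ 2 := fun x => by simp [legendreP]
      rw [intervalIntegral.integral_congr (fun x _ => this x), integral_pow]
      norm_num
    | (m + 2) =>
      have hJ1 := ih (m + 1) (by omega)
      have hX := intX (m + 1)
      have e1 : m + 1 + 1 = m + 2 := rfl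
      rw [e1] at hX
      push_cast at hX
      have hZ : ∫ x in (-1:ℝ)..1, legendreP m x * legendreP (m + 2) x = 0 :=
        intZ m (m + 2) (by omega)
      have hsplit : ∫ x in (-1:ℝ)..1, legendreP (m + 2) x ^ 2 =
          ((2 * (m:ℝ) + 3) * (∫ x in (-1:ℝ)..1, x * legendreP (m + 1) x * legendreP (m + 2) x) -
            ((m:ℝ) + 1) * ∫ x in (-1:ℝ)..1, legendreP m x * legendreP (m + 2) x) /
              ((m:ℝ) + 2) := by
        rw [eq_div_iff (by positivity : (m:ℝ) + 2 ≠ 0),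
          ← intervalIntegral.integral_const_mul, ← intervalIntegral.integral_const_mul,
          ← intervalIntegral.integral_sub
            ((continuous_const.fun_mul ((continuous_id'.fun_mul (continuous_legendreP _)).fun_mul
              (continuous_legendreP _))).intervalIntegrable _ _)
            ((continuous_const.fun_mul ((continuous_legendreP _).fun_mul
              (continuous_legendreP _))).intervalIntegrable _ _),
          ← intervalIntegral.integral_mul_const]
        apply intervalIntegral.integral_congr
        intro x _
        simp only []
        rw [sq]
        nth_rewrite 1 [legendreP_succ_succ]
        have : (m:ℝ) + 2 ≠ 0 := by positivity
        field_simp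
      rw [hsplit, hZ, hJ1] at *
      push_cast
      rw [div_eq_iff (by positivity : (m:ℝ) + 2 ≠ 0)]
      have h25 : 2 * (m:ℝ) + 5 ≠ 0 := by positivity
      have h23 : 2 * (m:ℝ) + 3 ≠ 0 := by positivity
      field_simp at hX ⊢
      push_cast at hX ⊢
      linear_combination hX

noncomputable def Psi (t T : ℝ) : ℕ → ℝ → ℝ
  | 0 => fun x => (x - t) / Real.sqrt (T - t)
  | (j + 1) => fun x =>
      Real.sqrt ((2 * ((j:ℝ) + 1) + 1) / (T - t)) * ((T - t) / (2 * (2 * (j:ℝ) + 3))) *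
        (legendreP (j + 2) ((2 * x - T - t) / (T - t)) -
          legendreP j ((2 * x - T - t) / (T - t)))

section TT

variable {t T : ℝ} (hT : t < T)

lemma hasDerivAt_affine (x : ℝ) :
    HasDerivAt (fun x : ℝ => (2 * x - T - t) / (T - t)) (2 / (T - t)) x := by
  have h := ((((hasDerivAt_id x).const_mul 2).sub_const T).sub_const t).div_const (T - t)
  simpa using h

include hT

lemma hasDerivAt_Psi (j : ℕ) (x : ℝ) :
    HasDerivAt (Psi t T j) (legendreSys t T j x) x := by
  have hTt : T - t ≠ 0 := by linarith
  have hTt' : (0:ℝ) < T - t := by linarith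
  match j with
  | 0 =>
    have h : HasDerivAt (Psi t T 0) (1 / Real.sqrt (T - t)) x := by
      have := ((hasDerivAt_id x).sub_const t).div_const (Real.sqrt (T - t))
      simpa [Psi, one_div] using this
    convert h using 1
    simp only [legendreSys, legendreP]
    rw [show (2 * ((0:ℕ):ℝ) + 1) / (T - t) = (Real.sqrt (T-t))⁻¹ ^ 2 by
      rw [inv_pow, Real.sq_sqrt hTt'.le]; norm_num]
    rw [Real.sqrt_sq (by positivity)]
    simp [one_div]
  | (j + 1) =>
    set y := (2 * x - T - t) / (T - t) with hy
    have h2 : HasDerivAt (fun x : ℝ => legendreP (j + 2) ((2 * x - T - t) / (T - t)))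
        (legD (j + 2) y * (2 / (T - t))) x :=
      by have := (hasDerivAt_legendreP (j + 2) ((2 * x - T - t) / (T - t))).comp x (hasDerivAt_affine (t := t) (T := T) x); exact this
    have h0 : HasDerivAt (fun x : ℝ => legendreP j ((2 * x - T - t) / (T - t)))
        (legD j y * (2 / (T - t))) x :=
      by have := (hasDerivAt_legendreP j ((2 * x - T - t) / (T - t))).comp x (hasDerivAt_affine (t := t) (T := T) x); exact this
    have h := ((h2.sub h0).const_mul
      (Real.sqrt ((2 * ((j:ℝ) + 1) + 1) / (T - t)) * ((T - t) / (2 * (2 * (j:ℝ) + 3)))))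
    have key : Real.sqrt ((2 * ((j:ℝ) + 1) + 1) / (T - t)) * ((T - t) / (2 * (2 * (j:ℝ) + 3))) *
        (legD (j + 2) y * (2 / (T - t)) - legD j y * (2 / (T - t))) =
        legendreSys t T (j + 1) x := by
      have hB := legB j y
      simp only [legendreSys]
      push_cast
      rw [hB]
      have h23 : 2 * (j:ℝ) + 3 ≠ 0 := by positivity
      field_simp
      ring
    rw [key] at h
    exact h

lemma Psi_left (j : ℕ) : Psi t T j t = 0 := by
  have hTt : T - t ≠ 0 := by linarith
  match j with
  | 0 => simp [Psi]
  | (j + 1) =>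
    have : (2 * t - T - t) / (T - t) = -1 := by field_simp; ring
    simp only [Psi, this, legendreP_neg_one]
    rw [pow_succ, pow_succ]
    ring

omit hT in
lemma Psi_zero_right : Psi t T 0 T = Real.sqrt (T - t) := by
  simp only [Psi]
  rw [Real.div_sqrt]

lemma Psi_succ_right (j : ℕ) : Psi t T (j + 1) T = 0 := by
  have hTt : T - t ≠ 0 := by linarith
  have : (2 * T - T - t) / (T - t) = 1 := by field_simp; ring
  simp [Psi, this, legendreP_one]

omit hT in
lemma continuous_Psi (j : ℕ) : Continuous (Psi t T j) := by
  match j with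
  | 0 => unfold Psi; fun_prop
  | (j + 1) =>
    have h2 := continuous_legendreP (j + 2)
    have h0 := continuous_legendreP j
    unfold Psi
    fun_prop

omit hT in
lemma continuous_legendreSys (j : ℕ) : Continuous (legendreSys t T j) := by
  have h := continuous_legendreP j
  unfold legendreSys
  fun_prop

lemma integral_sys (j : ℕ) (x : ℝ) :
    ∫ s in t..x, legendreSys t T j s = Psi t T j x := by
  rw [intervalIntegral.integral_eq_sub_of_hasDerivAt
    (fun s _ => hasDerivAt_Psi hT j s)
    ((continuous_legendreSys j).intervalIntegrable _ _), Psi_left hT]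
  ring

lemma integral_sys_Psi (j : ℕ) (x : ℝ) :
    ∫ s in t..x, legendreSys t T j s * Psi t T j s = Psi t T j x ^ 2 / 2 := by
  have hd : ∀ s : ℝ, HasDerivAt (fun s => Psi t T j s ^ 2 / 2)
      (legendreSys t T j s * Psi t T j s) s := by
    intro s
    have := ((hasDerivAt_Psi hT j s).fun_pow 2).div_const 2
    refine this.congr_deriv ?_
    ring
  rw [intervalIntegral.integral_eq_sub_of_hasDerivAt (fun s _ => hd s)
    (((continuous_legendreSys j).mul (continuous_Psi j)).intervalIntegrable _ _),
    Psi_left hT]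
  ring

end TT

noncomputable def rr (t T : ℝ) (a b : ℕ) : ℝ :=
  ∫ x in t..T, legendreSys t T a x * Psi t T a x * (Psi t T b x ^ 2 / 2)

section TT2

variable {t T : ℝ} (hT : t < T)

include hT

lemma C4_eq (a b : ℕ) :
    C4 t T (legendreSys t T) a a b b =
      Psi t T a T * (∫ x in t..T, legendreSys t T a x * (Psi t T b x ^ 2 / 2)) -
        rr t T a b := by
  set φ := legendreSys t T with hφ
  have h1 : ∀ s3 : ℝ, (∫ s2 in t..s3, φ b s2 * ∫ s1 in t..s2, φ b s1) =
      Psi t T b s3 ^ 2 / 2 := by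
    intro s3
    rw [← integral_sys_Psi hT b s3]
    apply intervalIntegral.integral_congr
    intro s2 _
    simp only []
    rw [integral_sys hT b s2]
  have h2 : ∀ s4 : ℝ, (∫ s3 in t..s4, φ a s3 *
      ∫ s2 in t..s3, φ b s2 * ∫ s1 in t..s2, φ b s1) =
      ∫ s3 in t..s4, φ a s3 * (Psi t T b s3 ^ 2 / 2) := by
    intro s4
    apply intervalIntegral.integral_congr
    intro s3 _
    simp only []
    rw [h1 s3]
  have hC4 : C4 t T φ a a b b =
      ∫ s4 in t..T, φ a s4 * ∫ s3 in t..s4, φ a s3 * (Psi t T b s3 ^ 2 / 2) := by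
    unfold C4
    apply intervalIntegral.integral_congr
    intro s4 _
    simp only []
    rw [h2 s4]
  set f := fun s : ℝ => φ a s * (Psi t T b s ^ 2 / 2) with hf
  have hfc : Continuous f := by
    have := continuous_legendreSys (t := t) (T := T) a
    have := continuous_Psi (t := t) (T := T) b
    fun_prop
  set g := fun x : ℝ => ∫ s in t..x, f s with hg
  have hgd : ∀ x : ℝ, HasDerivAt g (f x) x := by
    intro x
    exact intervalIntegral.integral_hasDerivAt_right
      (hfc.intervalIntegrable _ _)
      (hfc.stronglyMeasurableAtFilter _ _)
      hfc.continuousAt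
  have hibp := intervalIntegral.integral_mul_deriv_eq_deriv_mul (a := t) (b := T)
    (u := g) (u' := f) (v := Psi t T a) (v' := φ a)
    (fun x _ => hgd x) (fun x _ => hasDerivAt_Psi hT a x)
    (hfc.intervalIntegrable _ _)
    ((continuous_legendreSys a).intervalIntegrable _ _)
  have hgt : g t = 0 := intervalIntegral.integral_same
  have e1 : (∫ x in t..T, φ a x * ∫ s3 in t..x, φ a s3 * (Psi t T b s3 ^ 2 / 2)) =
      ∫ x in t..T, g x * φ a x := by
    apply intervalIntegral.integral_congr
    intro x _
    simp only [hg]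
    ring
  rw [hC4, e1, hibp, hgt]
  have e2 : (∫ x in t..T, f x * Psi t T a x) = rr t T a b := by
    unfold rr
    apply intervalIntegral.integral_congr
    intro x _
    simp only [hf]
    ring
  rw [e2]
  ring

lemma rr_add (a b : ℕ) :
    rr t T a b + rr t T b a = Psi t T a T ^ 2 / 2 * (Psi t T b T ^ 2 / 2) := by
  have hd : ∀ x : ℝ, HasDerivAt (fun x => Psi t T a x ^ 2 / 2 * (Psi t T b x ^ 2 / 2))
      (legendreSys t T a x * Psi t T a x * (Psi t T b x ^ 2 / 2) +
        legendreSys t T b x * Psi t T b x * (Psi t T a x ^ 2 / 2)) x := by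
    intro x
    have ha := ((hasDerivAt_Psi hT a x).fun_pow 2).div_const 2
    have hb := ((hasDerivAt_Psi hT b x).fun_pow 2).div_const 2
    have := ha.fun_mul hb
    refine this.congr_deriv ?_
    push_cast
    ring
  have hFt : Psi t T a t ^ 2 / 2 * (Psi t T b t ^ 2 / 2) = 0 := by
    rw [Psi_left hT a]; ring
  have hint := intervalIntegral.integral_eq_sub_of_hasDerivAt (a := t) (b := T)
    (fun x _ => hd x)
    (((((continuous_legendreSys a).fun_mul (continuous_Psi a)).fun_mul
        (((continuous_Psi b).fun_pow 2).div_const 2)).fun_add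
      (((continuous_legendreSys b).fun_mul (continuous_Psi b)).fun_mul
        (((continuous_Psi a).fun_pow 2).div_const 2))).intervalIntegrable _ _)
  rw [hFt, sub_zero] at hint
  rw [← hint]
  rw [intervalIntegral.integral_add
    ((((continuous_legendreSys a).fun_mul (continuous_Psi a)).fun_mul
        (((continuous_Psi b).fun_pow 2).div_const 2)).intervalIntegrable _ _)
    ((((continuous_legendreSys b).fun_mul (continuous_Psi b)).fun_mul
        (((continuous_Psi a).fun_pow 2).div_const 2)).intervalIntegrable _ _)]
  rfl

end TT2

section TT3

variable {t T : ℝ} (hT : t < T)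

include hT

lemma Vhalf_zero : ∫ x in t..T, Psi t T 0 x ^ 2 / 2 = (T - t) ^ 2 / 6 := by
  have hTt : (0:ℝ) < T - t := by linarith
  have hd : ∀ x : ℝ, HasDerivAt (fun x : ℝ => (x - t) ^ 3 / (6 * (T - t)))
      (Psi t T 0 x ^ 2 / 2) x := by
    intro x
    have h := (((hasDerivAt_id' x).sub_const t).fun_pow 3).div_const (6 * (T - t))
    refine h.congr_deriv ?_
    simp only [Psi, div_pow, Real.sq_sqrt hTt.le]
    push_cast
    field_simp
    ring
  rw [intervalIntegral.integral_eq_sub_of_hasDerivAt (fun x _ => hd x)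
    ((((continuous_Psi 0).pow 2).div_const 2).intervalIntegrable _ _)]
  field_simp
  ring

lemma Vhalf_succ (b : ℕ) :
    ∫ x in t..T, Psi t T (b + 1) x ^ 2 / 2 =
      (T - t) ^ 2 / 16 * (1 / (2 * (b:ℝ) + 1) - 1 / (2 * (b:ℝ) + 5)) := by
  have hTt : (0:ℝ) < T - t := by linarith
  have hTt' : T - t ≠ 0 := ne_of_gt hTt
  set c : ℝ := Real.sqrt ((2 * ((b:ℝ) + 1) + 1) / (T - t)) * ((T - t) / (2 * (2 * (b:ℝ) + 3)))
    with hc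
  have hc2 : c ^ 2 = (T - t) / (4 * (2 * (b:ℝ) + 3)) := by
    rw [hc, mul_pow, Real.sq_sqrt (by positivity)]
    have : 2 * (b:ℝ) + 3 ≠ 0 := by positivity
    field_simp
    ring
  set F : ℝ → ℝ := fun u => (legendreP (b + 2) u - legendreP b u) ^ 2 with hF
  have hFc : Continuous F := by
    have h2 := continuous_legendreP (b + 2)
    have h0 := continuous_legendreP b
    rw [hF]; fun_prop
  have step1 : ∫ x in t..T, Psi t T (b + 1) x ^ 2 / 2 =
      (c ^ 2 / 2) * ∫ x in t..T, F (2 / (T - t) * x + -(T + t) / (T - t)) := by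
    rw [← intervalIntegral.integral_const_mul]
    apply intervalIntegral.integral_congr
    intro x _
    simp only [Psi, hF]
    have : (2 * x - T - t) / (T - t) = 2 / (T - t) * x + -(T + t) / (T - t) := by
      field_simp
      ring
    rw [← this, ← hc]
    ring
  have step2 : (∫ x in t..T, F (2 / (T - t) * x + -(T + t) / (T - t))) =
      (2 / (T - t))⁻¹ • ∫ u in (-1:ℝ)..1, F u := by
    rw [intervalIntegral.integral_comp_mul_add F (by positivity) (-(T + t) / (T - t))]
    have hlo : 2 / (T - t) * t + -(T + t) / (T - t) = -1 := by field_simp; ring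
    have hhi : 2 / (T - t) * T + -(T + t) / (T - t) = 1 := by field_simp; ring
    rw [hlo, hhi]
  have step3 : (∫ u in (-1:ℝ)..1, F u) = 2 / (2 * (b:ℝ) + 5) + 2 / (2 * (b:ℝ) + 1) := by
    have hsplit : (∫ u in (-1:ℝ)..1, F u) =
        (∫ u in (-1:ℝ)..1, legendreP (b + 2) u ^ 2) -
          2 * (∫ u in (-1:ℝ)..1, legendreP b u * legendreP (b + 2) u) +
          ∫ u in (-1:ℝ)..1, legendreP b u ^ 2 := by
      rw [← intervalIntegral.integral_const_mul,
        ← intervalIntegral.integral_sub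
          (((continuous_legendreP _).fun_pow 2).intervalIntegrable _ _)
          ((continuous_const.fun_mul ((continuous_legendreP _).fun_mul
            (continuous_legendreP _))).intervalIntegrable _ _),
        ← intervalIntegral.integral_add
          ((((continuous_legendreP _).fun_pow 2).fun_sub (continuous_const.fun_mul
            ((continuous_legendreP _).fun_mul (continuous_legendreP _)))).intervalIntegrable _ _)
          (((continuous_legendreP _).fun_pow 2).intervalIntegrable _ _)]
      apply intervalIntegral.integral_congr
      intro u _
      simp only [hF]
      ring
    rw [hsplit, intJ, intJ, intZ b (b + 2) (by omega)]
    push_cast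
    ring
  rw [step1, step2, step3]
  rw [hc2]
  have h1 : 2 * (b:ℝ) + 3 ≠ 0 := by positivity
  have h2 : 2 * (b:ℝ) + 1 ≠ 0 := by positivity
  have h3 : 2 * (b:ℝ) + 5 ≠ 0 := by positivity
  simp only [smul_eq_mul]
  field_simp
  ring

lemma sumVhalf (p : ℕ) :
    ∑ b ∈ Finset.range (p + 1), (∫ x in t..T, Psi t T b x ^ 2 / 2) =
      (T - t) ^ 2 / 4 - (T - t) ^ 2 / 16 * (1 / (2 * (p:ℝ) + 1) + 1 / (2 * (p:ℝ) + 3)) := by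
  induction p with
  | zero =>
    rw [Finset.sum_range_one, Vhalf_zero hT]
    norm_num
    ring
  | succ p ih =>
    rw [Finset.sum_range_succ, ih, Vhalf_succ hT p]
    have h1 : 2 * (p:ℝ) + 1 ≠ 0 := by positivity
    have h3 : 2 * (p:ℝ) + 3 ≠ 0 := by positivity
    have h5 : 2 * (p:ℝ) + 5 ≠ 0 := by positivity
    push_cast
    field_simp
    ring

end TT3

section TT4

variable {t T : ℝ} (hT : t < T)

include hT

omit hT in
lemma sys0_const (x : ℝ) : legendreSys t T 0 x = Real.sqrt (1 / (T - t)) := by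
  simp [legendreSys, legendreP]

lemma sqrt_mul_sqrt_inv : Real.sqrt (T - t) * Real.sqrt (1 / (T - t)) = 1 := by
  have hTt : (0:ℝ) < T - t := by linarith
  rw [← Real.sqrt_mul hTt.le]
  rw [mul_one_div, div_self (ne_of_gt hTt), Real.sqrt_one]

lemma sum_Psi_sq (p : ℕ) :
    ∑ a ∈ Finset.range (p + 1), Psi t T a T ^ 2 / 2 = (T - t) / 2 := by
  have hTt : (0:ℝ) < T - t := by linarith
  rw [Finset.sum_eq_single_of_mem 0 (Finset.mem_range.2 (by omega))]
  · rw [Psi_zero_right, Real.sq_sqrt hTt.le]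
  · intro b _ hb
    obtain ⟨j, rfl⟩ : ∃ j, b = j + 1 := ⟨b - 1, by omega⟩
    rw [Psi_succ_right hT]
    ring

lemma sum_rr (p : ℕ) :
    ∑ a ∈ Finset.range (p + 1), ∑ b ∈ Finset.range (p + 1), rr t T a b =
      (T - t) ^ 2 / 8 := by
  have hswap : ∑ a ∈ Finset.range (p + 1), ∑ b ∈ Finset.range (p + 1), rr t T a b =
      ∑ a ∈ Finset.range (p + 1), ∑ b ∈ Finset.range (p + 1), rr t T b a :=
    Finset.sum_comm
  have hdouble : (∑ a ∈ Finset.range (p + 1), ∑ b ∈ Finset.range (p + 1), rr t T a b) * 2 =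
      ∑ a ∈ Finset.range (p + 1), ∑ b ∈ Finset.range (p + 1),
        (Psi t T a T ^ 2 / 2 * (Psi t T b T ^ 2 / 2)) := by
    rw [mul_two]
    nth_rewrite 2 [hswap]
    rw [← Finset.sum_add_distrib]
    apply Finset.sum_congr rfl
    intro a _
    rw [← Finset.sum_add_distrib]
    apply Finset.sum_congr rfl
    intro b _
    exact rr_add hT a b
  have hprod : ∑ a ∈ Finset.range (p + 1), ∑ b ∈ Finset.range (p + 1),
      (Psi t T a T ^ 2 / 2 * (Psi t T b T ^ 2 / 2)) = ((T - t) / 2) * ((T - t) / 2) := by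
    rw [← Finset.sum_mul_sum]
    rw [sum_Psi_sq hT p]
  rw [hprod] at hdouble
  linarith

lemma sum_C4 (p : ℕ) :
    ∑ a ∈ Finset.range (p + 1), ∑ b ∈ Finset.range (p + 1),
      C4 t T (legendreSys t T) a a b b =
      (T - t) ^ 2 / 8 -
        (T - t) ^ 2 / 16 * (1 / (2 * (p:ℝ) + 1) + 1 / (2 * (p:ℝ) + 3)) := by
  have hTt : (0:ℝ) < T - t := by linarith
  have hsplit : ∑ a ∈ Finset.range (p + 1), ∑ b ∈ Finset.range (p + 1),
      C4 t T (legendreSys t T) a a b b =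
      (∑ a ∈ Finset.range (p + 1), Psi t T a T *
        ∑ b ∈ Finset.range (p + 1),
          (∫ x in t..T, legendreSys t T a x * (Psi t T b x ^ 2 / 2))) -
      ∑ a ∈ Finset.range (p + 1), ∑ b ∈ Finset.range (p + 1), rr t T a b := by
    rw [← Finset.sum_sub_distrib]
    apply Finset.sum_congr rfl
    intro a _
    rw [Finset.mul_sum, ← Finset.sum_sub_distrib]
    apply Finset.sum_congr rfl
    intro b _
    exact C4_eq hT a b
  rw [hsplit, sum_rr hT p]
  have hbdy : ∑ a ∈ Finset.range (p + 1), Psi t T a T *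
      ∑ b ∈ Finset.range (p + 1),
        (∫ x in t..T, legendreSys t T a x * (Psi t T b x ^ 2 / 2)) =
      ∑ b ∈ Finset.range (p + 1), (∫ x in t..T, Psi t T b x ^ 2 / 2) := by
    rw [Finset.sum_eq_single_of_mem 0 (Finset.mem_range.2 (by omega))]
    · rw [Psi_zero_right]
      have hI : ∀ b : ℕ, (∫ x in t..T, legendreSys t T 0 x * (Psi t T b x ^ 2 / 2)) =
          Real.sqrt (1 / (T - t)) * ∫ x in t..T, Psi t T b x ^ 2 / 2 := by
        intro b
        rw [← intervalIntegral.integral_const_mul]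
        apply intervalIntegral.integral_congr
        intro x _
        simp only []
        rw [sys0_const]
      have : ∑ b ∈ Finset.range (p + 1),
          (∫ x in t..T, legendreSys t T 0 x * (Psi t T b x ^ 2 / 2)) =
          Real.sqrt (1 / (T - t)) *
            ∑ b ∈ Finset.range (p + 1), (∫ x in t..T, Psi t T b x ^ 2 / 2) := by
        rw [Finset.mul_sum]
        exact Finset.sum_congr rfl (fun b _ => hI b)
      rw [this, ← mul_assoc, sqrt_mul_sqrt_inv hT, one_mul]
    · intro a _ ha
      obtain ⟨j, rfl⟩ : ∃ j, a = j + 1 := ⟨a - 1, by omega⟩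
      rw [Psi_succ_right hT]
      ring
  rw [hbdy, sumVhalf hT p]
  ring

end TT4

theorem stmt11 (t T : ℝ) (hT : t < T) :
    Tendsto (fun p : ℕ => ∑ a ∈ Finset.range (p + 1), ∑ b ∈ Finset.range (p + 1),
      C4 t T (legendreSys t T) a a b b)
      atTop (nhds ((T - t) ^ 2 / 8)) := by
  have hlim1 : Tendsto (fun p : ℕ => 1 / (2 * (p:ℝ) + 1)) atTop (nhds 0) := by
    apply squeeze_zero (fun p => by positivity)
      (g := fun p : ℕ => 1 / ((p:ℝ) + 1))
    · intro p
      apply div_le_div_of_nonneg_left (by norm_num) (by positivity)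
      linarith [Nat.cast_nonneg (α := ℝ) p]
    · exact tendsto_one_div_add_atTop_nhds_zero_nat
  have hlim3 : Tendsto (fun p : ℕ => 1 / (2 * (p:ℝ) + 3)) atTop (nhds 0) := by
    apply squeeze_zero (fun p => by positivity)
      (g := fun p : ℕ => 1 / ((p:ℝ) + 1))
    · intro p
      apply div_le_div_of_nonneg_left (by norm_num) (by positivity)
      linarith [Nat.cast_nonneg (α := ℝ) p]
    · exact tendsto_one_div_add_atTop_nhds_zero_nat
  have htend : Tendsto (fun p : ℕ => (T - t) ^ 2 / 8 -
      (T - t) ^ 2 / 16 * (1 / (2 * (p:ℝ) + 1) + 1 / (2 * (p:ℝ) + 3)))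
      atTop (nhds ((T - t) ^ 2 / 8)) := by
    have := (tendsto_const_nhds (x := (T - t) ^ 2 / 8) (f := atTop (α := ℕ))).sub
      ((tendsto_const_nhds (x := (T - t) ^ 2 / 16) (f := atTop (α := ℕ))).mul
        (hlim1.add hlim3))
    simpa using this
  apply htend.congr
  intro p
  exact (sum_C4 hT p).symm
end

section
/- Define the fourth-order Fourier coefficients C_{j_4 j_3 j_2 j_1} = ∫_t^T φ_{j_4}(s_4) ∫_t^{s_4} φ_{j_3}(s_3) ∫_t^{s_3} φ_{j_2}(s_2) ∫_t^{s_2} φ_{j_1}(s_1) ds_1 ds_2 ds_3 ds_4 with respect to the trigonometric orthonormal system. Then lim_{p → ∞} Σ_{j_4=0}^{p} Σ_{j_2=0}^{p} C_{j_4 j_2 j_2 j_4} = 0. -/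
open MeasureTheory Filter Finset

open intervalIntegral Real



section Basic
variable (t : ℝ)

private lemma hd_lin (c x : ℝ) : HasDerivAt (fun s => c * (s - t)) c x := by
  simpa using ((hasDerivAt_id x).sub_const t).const_mul c

private lemma integral_eq' {f A : ℝ → ℝ} (hA : ∀ x, HasDerivAt A (f x) x)
    (hf : Continuous f) (a b : ℝ) : ∫ x in a..b, f x = A b - A a :=
  integral_eq_sub_of_hasDerivAt (fun x _ => hA x) (hf.intervalIntegrable a b)

private lemma cont_lin (c : ℝ) : Continuous (fun s : ℝ => c * (s - t)) := by continuity

/-- primitive of sin -/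
lemma prim_sin {c : ℝ} (hc : c ≠ 0) (a b : ℝ) :
    ∫ x in a..b, Real.sin (c * (x - t)) =
      (1 - Real.cos (c * (b - t))) / c - (1 - Real.cos (c * (a - t))) / c := by
  apply integral_eq' (A := fun s => (1 - Real.cos (c * (s - t))) / c)
  · intro x
    have h := (((hd_lin t c x).cos).const_sub 1).div_const c
    refine h.congr_deriv ?_
    field_simp
  · exact Real.continuous_sin.comp (cont_lin t c)

/-- primitive of cos -/
lemma prim_cos {c : ℝ} (hc : c ≠ 0) (a b : ℝ) :
    ∫ x in a..b, Real.cos (c * (x - t)) =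
      Real.sin (c * (b - t)) / c - Real.sin (c * (a - t)) / c := by
  apply integral_eq' (A := fun s => Real.sin (c * (s - t)) / c)
  · intro x
    have h := ((hd_lin t c x).sin).div_const c
    refine h.congr_deriv ?_
    field_simp
  · exact Real.continuous_cos.comp (cont_lin t c)

lemma prim_ysin {c : ℝ} (hc : c ≠ 0) (a b : ℝ) :
    ∫ x in a..b, (x - t) * Real.sin (c * (x - t)) =
      ((Real.sin (c * (b - t)) - c * (b - t) * Real.cos (c * (b - t)))
        - (Real.sin (c * (a - t)) - c * (a - t) * Real.cos (c * (a - t)))) / c ^ 2 := by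
  have : ∀ u v : ℝ, (u - v) / c ^ 2 = u / c^2 - v / c^2 := fun u v => by ring
  rw [this]
  apply integral_eq'
    (A := fun s => (Real.sin (c * (s - t)) - c * (s - t) * Real.cos (c * (s - t))) / c ^ 2)
  · intro x
    have h := (((hd_lin t c x).sin).sub ((hd_lin t c x).mul ((hd_lin t c x).cos))).div_const (c ^ 2)
    refine h.congr_deriv ?_
    field_simp
    ring
  · exact (continuous_id.sub continuous_const).mul (Real.continuous_sin.comp (cont_lin t c))

lemma prim_ycos {c : ℝ} (hc : c ≠ 0) (a b : ℝ) :
    ∫ x in a..b, (x - t) * Real.cos (c * (x - t)) =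
      ((Real.cos (c * (b - t)) + c * (b - t) * Real.sin (c * (b - t)))
        - (Real.cos (c * (a - t)) + c * (a - t) * Real.sin (c * (a - t)))) / c ^ 2 := by
  have : ∀ u v : ℝ, (u - v) / c ^ 2 = u / c^2 - v / c^2 := fun u v => by ring
  rw [this]
  apply integral_eq'
    (A := fun s => (Real.cos (c * (s - t)) + c * (s - t) * Real.sin (c * (s - t))) / c ^ 2)
  · intro x
    have h := (((hd_lin t c x).cos).add ((hd_lin t c x).mul ((hd_lin t c x).sin))).div_const (c ^ 2)
    refine h.congr_deriv ?_
    field_simp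
    ring
  · exact (continuous_id.sub continuous_const).mul (Real.continuous_cos.comp (cont_lin t c))

lemma prim_y (a b : ℝ) : ∫ x in a..b, (x - t) = (b - t) ^ 2 / 2 - (a - t) ^ 2 / 2 := by
  apply integral_eq' (A := fun s => (s - t) ^ 2 / 2)
  · intro x
    have h := (((hasDerivAt_id x).sub_const t).pow 2).div_const 2
    refine h.congr_deriv ?_
    push_cast
    simp only [id]
    ring
  · exact continuous_id.sub continuous_const

lemma prim_y2 (a b : ℝ) : ∫ x in a..b, (x - t) ^ 2 = (b - t) ^ 3 / 3 - (a - t) ^ 3 / 3 := by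
  apply integral_eq' (A := fun s => (s - t) ^ 3 / 3)
  · intro x
    have h := (((hasDerivAt_id x).sub_const t).pow 3).div_const 3
    refine h.congr_deriv ?_
    push_cast
    simp only [id]
    ring
  · exact (continuous_id.sub continuous_const).pow 2

end Basic

lemma sin_two_pi_int (k : ℤ) : Real.sin ((k : ℝ) * (2 * π)) = 0 := by
  have h := Real.sin_int_mul_pi (2 * k)
  push_cast at h
  convert h using 2
  ring

lemma cos_two_pi_int (k : ℤ) : Real.cos ((k : ℝ) * (2 * π)) = 1 :=
  Real.cos_int_mul_two_pi k

section Jeq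
variable (t T : ℝ)

private lemma hdInt {g : ℝ → ℝ} (hg : Continuous g) (x : ℝ) :
    HasDerivAt (fun u => ∫ s in t..u, g s) (g x) x :=
  (hg.integral_hasStrictDerivAt t x).hasDerivAt

private lemma contInt {g : ℝ → ℝ} (hg : Continuous g) :
    Continuous (fun u => ∫ s in t..u, g s) := by
  have : Differentiable ℝ (fun u => ∫ s in t..u, g s) :=
    fun x => (hdInt t hg x).differentiableAt
  exact this.continuous

lemma J_eq (f g : ℝ → ℝ) (hf : Continuous f) (hg : Continuous g) :
    (∫ s4 in t..T, f s4 * ∫ s3 in t..s4, g s3 * ∫ s2 in t..s3, g s2 * ∫ s1 in t..s2, f s1)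
      = (∫ s in t..T, f s) *
          ((∫ s in t..T, g s) * (∫ s in t..T, g s * ∫ u in t..s, f u)
            - ∫ s in t..T, (∫ u in t..s, g u) * (g s * ∫ u in t..s, f u))
        - (∫ s in t..T, g s * ∫ u in t..s, f u) ^ 2 / 2 := by
  set F : ℝ → ℝ := fun x => ∫ s in t..x, f s with hF
  set G : ℝ → ℝ := fun x => ∫ s in t..x, g s with hG
  have hFc : Continuous F := contInt t hf
  have hGc : Continuous G := contInt t hg
  have hgF : Continuous (fun x => g x * F x) := hg.mul hFc
  set H : ℝ → ℝ := fun x => ∫ s in t..x, g s * F s with hH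
  have hHc : Continuous H := contInt t hgF
  have hGgF : Continuous (fun x => G x * (g x * F x)) := hGc.mul hgF
  set K : ℝ → ℝ := fun x => ∫ s in t..x, G s * (g s * F s) with hK
  -- third integral
  have step3 : ∀ s4 : ℝ, (∫ s3 in t..s4, g s3 * H s3) = G s4 * H s4 - K s4 := by
    intro s4
    have hder : ∀ x ∈ Set.uIcc t s4,
        HasDerivAt (fun y => G y * H y - K y) (g x * H x) x := by
      intro x _
      have h1 := ((hdInt t hg x).mul (hdInt t hgF x)).sub (hdInt t hGgF x)
      refine h1.congr_deriv ?_
      show g x * H x + G x * (g x * F x) - G x * (g x * F x) = g x * H x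
      ring
    have := integral_eq_sub_of_hasDerivAt hder ((hg.mul hHc).intervalIntegrable t s4)
    simp only [hG, hH, hK, intervalIntegral.integral_same, mul_zero, sub_zero, zero_mul] at this ⊢
    rw [this]
  have step4 : (∫ s4 in t..T, f s4 * (G s4 * H s4 - K s4))
      = F T * (G T * H T - K T) - (H T) ^ 2 / 2 := by
    have hder : ∀ x ∈ Set.uIcc t T,
        HasDerivAt (fun y => F y * (G y * H y - K y) - H y ^ 2 / 2)
          (f x * (G x * H x - K x)) x := by
      intro x _
      have h1 : HasDerivAt (fun y => F y * (G y * H y - K y))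
          (f x * (G x * H x - K x) + F x * (g x * H x + G x * (g x * F x) - G x * (g x * F x))) x :=
        (hdInt t hf x).mul (((hdInt t hg x).mul (hdInt t hgF x)).sub (hdInt t hGgF x))
      have h2 : HasDerivAt (fun y => H y ^ 2 / 2) (H x * (g x * F x)) x := by
        have := ((hdInt t hgF x).pow 2).div_const 2
        refine this.congr_deriv ?_
        push_cast
        ring
      refine (h1.sub h2).congr_deriv ?_
      ring
    have hcont : Continuous (fun x => f x * (G x * H x - K x)) :=
      hf.mul ((hGc.mul hHc).sub (contInt t hGgF))
    have := integral_eq_sub_of_hasDerivAt hder (hcont.intervalIntegrable t T)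
    simp only [hF, hG, hH, hK, intervalIntegral.integral_same, mul_zero, zero_mul, sub_zero,
      zero_pow, zero_div] at this ⊢
    rw [this]
    ring
  calc (∫ s4 in t..T, f s4 * ∫ s3 in t..s4, g s3 * ∫ s2 in t..s3, g s2 * ∫ s1 in t..s2, f s1)
      = ∫ s4 in t..T, f s4 * (G s4 * H s4 - K s4) := by
        apply intervalIntegral.integral_congr
        intro s4 _
        show f s4 * (∫ s3 in t..s4, g s3 * ∫ s2 in t..s3, g s2 * ∫ s1 in t..s2, f s1)
          = f s4 * (G s4 * H s4 - K s4)
        rw [← step3 s4]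
    _ = F T * (G T * H T - K T) - (H T) ^ 2 / 2 := step4
    _ = _ := rfl
end Jeq

section Endpoint
variable {t T : ℝ}

private lemma hc_ne (hT : t < T) {k : ℤ} (hk : k ≠ 0) : (k : ℝ) * (2 * π / (T - t)) ≠ 0 := by
  have h1 : (k : ℝ) ≠ 0 := Int.cast_ne_zero.mpr hk
  have h2 : T - t ≠ 0 := ne_of_gt (sub_pos.mpr hT)
  have := Real.pi_pos
  positivity

private lemma hcT (hT : t < T) (k : ℤ) : (k : ℝ) * (2 * π / (T - t)) * (T - t) = k * (2 * π) := by
  have h2 : T - t ≠ 0 := ne_of_gt (sub_pos.mpr hT)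
  field_simp

lemma IS (hT : t < T) (k : ℤ) :
    ∫ x in t..T, Real.sin ((k : ℝ) * (2 * π / (T - t)) * (x - t)) = 0 := by
  rcases eq_or_ne k 0 with rfl | hk
  · simp
  · rw [prim_sin t (hc_ne hT hk), hcT hT k]
    simp [cos_two_pi_int]

lemma ICfull (hT : t < T) (k : ℤ) :
    ∫ x in t..T, Real.cos ((k : ℝ) * (2 * π / (T - t)) * (x - t))
      = if k = 0 then T - t else 0 := by
  rcases eq_or_ne k 0 with rfl | hk
  · simp
  · rw [prim_cos t (hc_ne hT hk), hcT hT k, if_neg hk]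
    simp [sin_two_pi_int]

lemma IYS (hT : t < T) {k : ℤ} (hk : k ≠ 0) :
    ∫ x in t..T, (x - t) * Real.sin ((k : ℝ) * (2 * π / (T - t)) * (x - t))
      = -(T - t) ^ 2 / (2 * π * k) := by
  rw [prim_ysin t (hc_ne hT hk), hcT hT k]
  simp only [sin_two_pi_int, cos_two_pi_int, sub_self, mul_zero, zero_mul, Real.sin_zero,
    Real.cos_zero, mul_one, zero_sub, sub_zero]
  have h2 : T - t ≠ 0 := ne_of_gt (sub_pos.mpr hT)
  have h1 : (k : ℝ) ≠ 0 := Int.cast_ne_zero.mpr hk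
  have hpi := Real.pi_ne_zero
  field_simp

lemma IYC (hT : t < T) {k : ℤ} (hk : k ≠ 0) :
    ∫ x in t..T, (x - t) * Real.cos ((k : ℝ) * (2 * π / (T - t)) * (x - t)) = 0 := by
  rw [prim_ycos t (hc_ne hT hk), hcT hT k]
  simp [sin_two_pi_int, cos_two_pi_int]

lemma IY : ∫ x in t..T, (x - t) = (T - t) ^ 2 / 2 := by
  rw [prim_y t]; simp

lemma IY2 : ∫ x in t..T, (x - t) ^ 2 = (T - t) ^ 3 / 3 := by
  rw [prim_y2 t]; simp

end Endpoint

section Products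
variable {t T : ℝ}

private lemma contc (t T c : ℝ) : Continuous (fun x : ℝ => Real.cos (c * (x - t))) :=
  Real.continuous_cos.comp (by continuity)
private lemma conts (t T c : ℝ) : Continuous (fun x : ℝ => Real.sin (c * (x - t))) :=
  Real.continuous_sin.comp (by continuity)

lemma ISSn (hT : t < T) {p q : ℕ} (hp : p ≠ 0) (hq : q ≠ 0) :
    ∫ x in t..T, Real.sin ((p : ℝ) * (2 * π / (T - t)) * (x - t)) *
        Real.sin ((q : ℝ) * (2 * π / (T - t)) * (x - t))
      = if p = q then (T - t) / 2 else 0 := by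
  have key : ∀ x : ℝ, Real.sin ((p : ℝ) * (2 * π / (T - t)) * (x - t)) *
        Real.sin ((q : ℝ) * (2 * π / (T - t)) * (x - t))
      = (Real.cos ((((p : ℤ) - q : ℤ) : ℝ) * (2 * π / (T - t)) * (x - t))
          - Real.cos ((((p + q : ℕ) : ℤ) : ℝ) * (2 * π / (T - t)) * (x - t))) / 2 := by
    intro x
    push_cast
    rw [show ((p : ℝ) - q) * (2 * π / (T - t)) * (x - t)
        = (p : ℝ) * (2 * π / (T - t)) * (x - t) - (q : ℝ) * (2 * π / (T - t)) * (x - t) by ring,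
      show ((p : ℝ) + q) * (2 * π / (T - t)) * (x - t)
        = (p : ℝ) * (2 * π / (T - t)) * (x - t) + (q : ℝ) * (2 * π / (T - t)) * (x - t) by ring,
      Real.cos_sub, Real.cos_add]
    ring
  simp_rw [key]
  rw [intervalIntegral.integral_div, intervalIntegral.integral_sub
    ((contc t T _).intervalIntegrable t T) ((contc t T _).intervalIntegrable t T),
    ICfull hT ((p : ℤ) - q), ICfull hT ((p + q : ℕ) : ℤ)]
  have h1 : (((p + q : ℕ) : ℤ) = 0) = False := by simp; omega
  have h2 : (((p : ℤ) - q) = 0) ↔ (p = q) := by omega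
  simp only [h1, if_false, sub_zero]
  by_cases h : p = q
  · rw [if_pos (h2.mpr h), if_pos h]
  · rw [if_neg (fun c => h (h2.mp c)), if_neg h]
    norm_num

lemma ICCn (hT : t < T) {p q : ℕ} (hp : p ≠ 0) (hq : q ≠ 0) :
    ∫ x in t..T, Real.cos ((p : ℝ) * (2 * π / (T - t)) * (x - t)) *
        Real.cos ((q : ℝ) * (2 * π / (T - t)) * (x - t))
      = if p = q then (T - t) / 2 else 0 := by
  have key : ∀ x : ℝ, Real.cos ((p : ℝ) * (2 * π / (T - t)) * (x - t)) *
        Real.cos ((q : ℝ) * (2 * π / (T - t)) * (x - t))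
      = (Real.cos ((((p : ℤ) - q : ℤ) : ℝ) * (2 * π / (T - t)) * (x - t))
          + Real.cos ((((p + q : ℕ) : ℤ) : ℝ) * (2 * π / (T - t)) * (x - t))) / 2 := by
    intro x
    push_cast
    rw [show ((p : ℝ) - q) * (2 * π / (T - t)) * (x - t)
        = (p : ℝ) * (2 * π / (T - t)) * (x - t) - (q : ℝ) * (2 * π / (T - t)) * (x - t) by ring,
      show ((p : ℝ) + q) * (2 * π / (T - t)) * (x - t)
        = (p : ℝ) * (2 * π / (T - t)) * (x - t) + (q : ℝ) * (2 * π / (T - t)) * (x - t) by ring,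
      Real.cos_sub, Real.cos_add]
    ring
  simp_rw [key]
  rw [intervalIntegral.integral_div, intervalIntegral.integral_add
    ((contc t T _).intervalIntegrable t T) ((contc t T _).intervalIntegrable t T),
    ICfull hT ((p : ℤ) - q), ICfull hT ((p + q : ℕ) : ℤ)]
  have h1 : (((p + q : ℕ) : ℤ) = 0) = False := by simp; omega
  have h2 : (((p : ℤ) - q) = 0) ↔ (p = q) := by omega
  simp only [h1, if_false, add_zero]
  by_cases h : p = q
  · rw [if_pos (h2.mpr h), if_pos h]
  · rw [if_neg (fun c => h (h2.mp c)), if_neg h]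
    norm_num

lemma ISCn (hT : t < T) (p q : ℕ) :
    ∫ x in t..T, Real.sin ((p : ℝ) * (2 * π / (T - t)) * (x - t)) *
        Real.cos ((q : ℝ) * (2 * π / (T - t)) * (x - t)) = 0 := by
  have key : ∀ x : ℝ, Real.sin ((p : ℝ) * (2 * π / (T - t)) * (x - t)) *
        Real.cos ((q : ℝ) * (2 * π / (T - t)) * (x - t))
      = (Real.sin ((((p + q : ℕ) : ℤ) : ℝ) * (2 * π / (T - t)) * (x - t))
          + Real.sin ((((p : ℤ) - q : ℤ) : ℝ) * (2 * π / (T - t)) * (x - t))) / 2 := by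
    intro x
    push_cast
    rw [show ((p : ℝ) - q) * (2 * π / (T - t)) * (x - t)
        = (p : ℝ) * (2 * π / (T - t)) * (x - t) - (q : ℝ) * (2 * π / (T - t)) * (x - t) by ring,
      show ((p : ℝ) + q) * (2 * π / (T - t)) * (x - t)
        = (p : ℝ) * (2 * π / (T - t)) * (x - t) + (q : ℝ) * (2 * π / (T - t)) * (x - t) by ring,
      Real.sin_sub, Real.sin_add]
    ring
  simp_rw [key]
  rw [intervalIntegral.integral_div, intervalIntegral.integral_add
    ((conts t T _).intervalIntegrable t T) ((conts t T _).intervalIntegrable t T),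
    IS hT ((p + q : ℕ) : ℤ), IS hT ((p : ℤ) - q)]
  norm_num

end Products

section TrigUnfold
variable {t T : ℝ}

lemma trig0 : trigSys t T 0 = fun _ => 1 / Real.sqrt (T - t) := by
  funext x; simp [trigSys]

lemma trigOdd (m : ℕ) : trigSys t T (2 * m + 1)
    = fun x => Real.sqrt (2 / (T - t)) *
        Real.sin (((m + 1 : ℕ) : ℝ) * (2 * π / (T - t)) * (x - t)) := by
  funext x
  have h1 : 2 * m + 1 ≠ 0 := by omega
  have h2 : (2 * m + 1) % 2 = 1 := by omega
  have h3 : (2 * m + 1 + 1) / 2 = m + 1 := by omega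
  simp only [trigSys, if_neg h1, h2, if_true, h3]
  congr 1
  ring

lemma trigEven (m : ℕ) : trigSys t T (2 * m + 2)
    = fun x => Real.sqrt (2 / (T - t)) *
        Real.cos (((m + 1 : ℕ) : ℝ) * (2 * π / (T - t)) * (x - t)) := by
  funext x
  have h1 : 2 * m + 2 ≠ 0 := by omega
  have h2 : ¬ ((2 * m + 2) % 2 = 1) := by omega
  have h3 : (2 * m + 2) / 2 = m + 1 := by omega
  simp only [trigSys, if_neg h1, if_neg h2, h3]
  congr 1
  ring

lemma trigCont (j : ℕ) : Continuous (trigSys t T j) := by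
  unfold trigSys
  split_ifs <;> fun_prop

end TrigUnfold

section NatEndpoints
variable {t T : ℝ}

lemma ISn (hT : t < T) (p : ℕ) :
    ∫ x in t..T, Real.sin ((p : ℝ) * (2 * π / (T - t)) * (x - t)) = 0 := by
  have h := IS hT (p : ℤ)
  push_cast at h
  exact h

lemma ICn (hT : t < T) {p : ℕ} (hp : p ≠ 0) :
    ∫ x in t..T, Real.cos ((p : ℝ) * (2 * π / (T - t)) * (x - t)) = 0 := by
  have h := ICfull hT (p : ℤ)
  rw [if_neg (by exact_mod_cast hp)] at h
  push_cast at h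
  exact h

lemma IYSn (hT : t < T) {p : ℕ} (hp : p ≠ 0) :
    ∫ x in t..T, (x - t) * Real.sin ((p : ℝ) * (2 * π / (T - t)) * (x - t))
      = -(T - t) ^ 2 / (2 * π * p) := by
  have h := IYS hT (k := (p : ℤ)) (by exact_mod_cast hp)
  push_cast at h
  exact h

lemma IYCn (hT : t < T) {p : ℕ} (hp : p ≠ 0) :
    ∫ x in t..T, (x - t) * Real.cos ((p : ℝ) * (2 * π / (T - t)) * (x - t)) = 0 := by
  have h := IYC hT (k := (p : ℤ)) (by exact_mod_cast hp)
  push_cast at h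
  exact h

private lemma freq_ne (hT : t < T) {p : ℕ} (hp : p ≠ 0) :
    (p : ℝ) * (2 * π / (T - t)) ≠ 0 := by
  have h1 : (p : ℝ) ≠ 0 := Nat.cast_ne_zero.mpr hp
  have h2 : T - t ≠ 0 := ne_of_gt (sub_pos.mpr hT)
  have := Real.pi_pos
  positivity

/-- primitive of trigSys 0 -/
lemma P0 : ∀ x : ℝ, (∫ u in t..x, trigSys t T 0 u) = (x - t) * (1 / Real.sqrt (T - t)) := by
  intro x
  rw [trig0]
  simp [smul_eq_mul]

lemma POdd (hT : t < T) (m : ℕ) : ∀ x : ℝ, (∫ u in t..x, trigSys t T (2 * m + 1) u)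
    = Real.sqrt (2 / (T - t)) *
        ((1 - Real.cos (((m + 1 : ℕ) : ℝ) * (2 * π / (T - t)) * (x - t)))
          / (((m + 1 : ℕ) : ℝ) * (2 * π / (T - t)))) := by
  intro x
  rw [trigOdd]
  rw [intervalIntegral.integral_const_mul, prim_sin t (freq_ne hT (Nat.succ_ne_zero m))]
  simp

lemma PEven (hT : t < T) (m : ℕ) : ∀ x : ℝ, (∫ u in t..x, trigSys t T (2 * m + 2) u)
    = Real.sqrt (2 / (T - t)) *
        (Real.sin (((m + 1 : ℕ) : ℝ) * (2 * π / (T - t)) * (x - t))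
          / (((m + 1 : ℕ) : ℝ) * (2 * π / (T - t)))) := by
  intro x
  rw [trigEven]
  rw [intervalIntegral.integral_const_mul, prim_cos t (freq_ne hT (Nat.succ_ne_zero m))]
  simp

end NatEndpoints

section CaseLemmas
variable {t T : ℝ}

private lemma ci {t T : ℝ} {f : ℝ → ℝ} (h : Continuous f) :
    IntervalIntegrable f MeasureTheory.volume t T := h.intervalIntegrable t T

private lemma E1odd (hT : t < T) (m : ℕ) : (∫ s in t..T, trigSys t T (2 * m + 1) s) = 0 := by
  simp only [trigOdd]
  rw [intervalIntegral.integral_const_mul, ISn hT (m + 1), mul_zero]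

private lemma E1even (hT : t < T) (m : ℕ) : (∫ s in t..T, trigSys t T (2 * m + 2) s) = 0 := by
  simp only [trigEven]
  rw [intervalIntegral.integral_const_mul, ICn hT (Nat.succ_ne_zero m), mul_zero]

/-- C4 for (odd, odd) indices vanishes. -/
lemma Z_oo (hT : t < T) (m n : ℕ) :
    C4 t T (trigSys t T) (2 * m + 1) (2 * n + 1) (2 * n + 1) (2 * m + 1) = 0 := by
  simp only [C4]
  rw [J_eq t T _ _ (trigCont _) (trigCont _)]
  have e3 : (∫ s in t..T, trigSys t T (2 * n + 1) s * ∫ u in t..s, trigSys t T (2 * m + 1) u)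
      = 0 := by
    simp_rw [POdd hT m]
    simp only [trigOdd]
    have key : ∀ s : ℝ,
        (Real.sqrt (2 / (T - t)) * Real.sin (((n + 1 : ℕ) : ℝ) * (2 * π / (T - t)) * (s - t))) *
          (Real.sqrt (2 / (T - t)) *
            ((1 - Real.cos (((m + 1 : ℕ) : ℝ) * (2 * π / (T - t)) * (s - t)))
              / (((m + 1 : ℕ) : ℝ) * (2 * π / (T - t)))))
        = (Real.sqrt (2 / (T - t)) * Real.sqrt (2 / (T - t))
              / (((m + 1 : ℕ) : ℝ) * (2 * π / (T - t)))) *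
            Real.sin (((n + 1 : ℕ) : ℝ) * (2 * π / (T - t)) * (s - t))
          - (Real.sqrt (2 / (T - t)) * Real.sqrt (2 / (T - t))
              / (((m + 1 : ℕ) : ℝ) * (2 * π / (T - t)))) *
            (Real.sin (((n + 1 : ℕ) : ℝ) * (2 * π / (T - t)) * (s - t)) *
              Real.cos (((m + 1 : ℕ) : ℝ) * (2 * π / (T - t)) * (s - t))) := by
      intro s; ring
    simp_rw [key]
    rw [intervalIntegral.integral_sub (ci (by fun_prop)) (ci (by fun_prop)),
      intervalIntegral.integral_const_mul, intervalIntegral.integral_const_mul,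
      ISn hT (n + 1), ISCn hT (n + 1) (m + 1)]
    ring
  rw [E1odd hT m, e3]
  ring

/-- C4 for (even, even) indices vanishes. -/
lemma Z_ee (hT : t < T) (m n : ℕ) :
    C4 t T (trigSys t T) (2 * m + 2) (2 * n + 2) (2 * n + 2) (2 * m + 2) = 0 := by
  simp only [C4]
  rw [J_eq t T _ _ (trigCont _) (trigCont _)]
  have e3 : (∫ s in t..T, trigSys t T (2 * n + 2) s * ∫ u in t..s, trigSys t T (2 * m + 2) u)
      = 0 := by
    simp_rw [PEven hT m]
    simp only [trigEven]
    have key : ∀ s : ℝ,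
        (Real.sqrt (2 / (T - t)) * Real.cos (((n + 1 : ℕ) : ℝ) * (2 * π / (T - t)) * (s - t))) *
          (Real.sqrt (2 / (T - t)) *
            (Real.sin (((m + 1 : ℕ) : ℝ) * (2 * π / (T - t)) * (s - t))
              / (((m + 1 : ℕ) : ℝ) * (2 * π / (T - t)))))
        = (Real.sqrt (2 / (T - t)) * Real.sqrt (2 / (T - t))
              / (((m + 1 : ℕ) : ℝ) * (2 * π / (T - t)))) *
            (Real.sin (((m + 1 : ℕ) : ℝ) * (2 * π / (T - t)) * (s - t)) *
              Real.cos (((n + 1 : ℕ) : ℝ) * (2 * π / (T - t)) * (s - t))) := by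
      intro s; ring
    simp_rw [key]
    rw [intervalIntegral.integral_const_mul, ISCn hT (m + 1) (n + 1)]
    ring
  rw [E1even hT m, e3]
  ring

/-- C4 for (even, 0) indices vanishes. -/
lemma Z_e0 (hT : t < T) (m : ℕ) :
    C4 t T (trigSys t T) (2 * m + 2) 0 0 (2 * m + 2) = 0 := by
  simp only [C4]
  rw [J_eq t T _ _ (trigCont _) (trigCont _)]
  have e3 : (∫ s in t..T, trigSys t T 0 s * ∫ u in t..s, trigSys t T (2 * m + 2) u) = 0 := by
    simp_rw [PEven hT m]
    simp only [trig0]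
    have key : ∀ s : ℝ,
        (1 / Real.sqrt (T - t)) *
          (Real.sqrt (2 / (T - t)) *
            (Real.sin (((m + 1 : ℕ) : ℝ) * (2 * π / (T - t)) * (s - t))
              / (((m + 1 : ℕ) : ℝ) * (2 * π / (T - t)))))
        = (1 / Real.sqrt (T - t) * Real.sqrt (2 / (T - t))
              / (((m + 1 : ℕ) : ℝ) * (2 * π / (T - t)))) *
            Real.sin (((m + 1 : ℕ) : ℝ) * (2 * π / (T - t)) * (s - t)) := by
      intro s; ring
    simp_rw [key]
    rw [intervalIntegral.integral_const_mul, ISn hT (m + 1)]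
    ring
  rw [E1even hT m, e3]
  ring

end CaseLemmas

section ValueCasesA
variable {t T : ℝ}

/-- C4 (odd m, even n): cross term. -/
lemma V_oe (hT : t < T) (m n : ℕ) :
    C4 t T (trigSys t T) (2 * m + 1) (2 * n + 2) (2 * n + 2) (2 * m + 1)
      = if m = n then -(T - t) ^ 2 / (8 * π ^ 2 * ((m + 1 : ℕ) : ℝ) ^ 2) else 0 := by
  have hL : (0 : ℝ) < T - t := sub_pos.mpr hT
  have hpi := Real.pi_pos
  simp only [C4]
  rw [J_eq t T _ _ (trigCont _) (trigCont _)]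
  have sq : Real.sqrt (2 / (T - t)) * Real.sqrt (2 / (T - t)) = 2 / (T - t) :=
    Real.mul_self_sqrt (by positivity)
  have e3 : (∫ s in t..T, trigSys t T (2 * n + 2) s * ∫ u in t..s, trigSys t T (2 * m + 1) u)
      = if m = n then -(1 / (((m + 1 : ℕ) : ℝ) * (2 * π / (T - t)))) else 0 := by
    simp_rw [POdd hT m]
    simp only [trigEven]
    have key : ∀ s : ℝ,
        (Real.sqrt (2 / (T - t)) * Real.cos (((n + 1 : ℕ) : ℝ) * (2 * π / (T - t)) * (s - t))) *
          (Real.sqrt (2 / (T - t)) *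
            ((1 - Real.cos (((m + 1 : ℕ) : ℝ) * (2 * π / (T - t)) * (s - t)))
              / (((m + 1 : ℕ) : ℝ) * (2 * π / (T - t)))))
        = (Real.sqrt (2 / (T - t)) * Real.sqrt (2 / (T - t))
              / (((m + 1 : ℕ) : ℝ) * (2 * π / (T - t)))) *
            Real.cos (((n + 1 : ℕ) : ℝ) * (2 * π / (T - t)) * (s - t))
          - (Real.sqrt (2 / (T - t)) * Real.sqrt (2 / (T - t))
              / (((m + 1 : ℕ) : ℝ) * (2 * π / (T - t)))) *
            (Real.cos (((n + 1 : ℕ) : ℝ) * (2 * π / (T - t)) * (s - t)) *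
              Real.cos (((m + 1 : ℕ) : ℝ) * (2 * π / (T - t)) * (s - t))) := by
      intro s; ring
    simp_rw [key]
    rw [intervalIntegral.integral_sub (ci (by fun_prop)) (ci (by fun_prop)),
      intervalIntegral.integral_const_mul, intervalIntegral.integral_const_mul,
      ICn hT (Nat.succ_ne_zero n), ICCn hT (Nat.succ_ne_zero n) (Nat.succ_ne_zero m), sq]
    by_cases h : m = n
    · subst h
      rw [if_pos rfl, if_pos rfl]
      have h1 : ((m + 1 : ℕ) : ℝ) ≠ 0 := Nat.cast_ne_zero.mpr (Nat.succ_ne_zero m)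
      have h2 : T - t ≠ 0 := ne_of_gt hL
      field_simp
      ring
    · rw [if_neg (fun c => h (Nat.succ_injective c).symm), if_neg h]
      ring
  rw [E1odd hT m, e3, zero_mul, zero_sub]
  by_cases h : m = n
  · rw [if_pos h, if_pos h]
    have h1 : ((m + 1 : ℕ) : ℝ) ≠ 0 := Nat.cast_ne_zero.mpr (Nat.succ_ne_zero m)
    have h2 : T - t ≠ 0 := ne_of_gt hL
    have h3 : π ≠ 0 := ne_of_gt hpi
    field_simp
    ring
  · rw [if_neg h, if_neg h]
    norm_num

/-- C4 (even m, odd n): cross term. -/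
lemma V_eo (hT : t < T) (m n : ℕ) :
    C4 t T (trigSys t T) (2 * m + 2) (2 * n + 1) (2 * n + 1) (2 * m + 2)
      = if m = n then -(T - t) ^ 2 / (8 * π ^ 2 * ((m + 1 : ℕ) : ℝ) ^ 2) else 0 := by
  have hL : (0 : ℝ) < T - t := sub_pos.mpr hT
  have hpi := Real.pi_pos
  simp only [C4]
  rw [J_eq t T _ _ (trigCont _) (trigCont _)]
  have sq : Real.sqrt (2 / (T - t)) * Real.sqrt (2 / (T - t)) = 2 / (T - t) :=
    Real.mul_self_sqrt (by positivity)
  have e3 : (∫ s in t..T, trigSys t T (2 * n + 1) s * ∫ u in t..s, trigSys t T (2 * m + 2) u)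
      = if m = n then 1 / (((m + 1 : ℕ) : ℝ) * (2 * π / (T - t))) else 0 := by
    simp_rw [PEven hT m]
    simp only [trigOdd]
    have key : ∀ s : ℝ,
        (Real.sqrt (2 / (T - t)) * Real.sin (((n + 1 : ℕ) : ℝ) * (2 * π / (T - t)) * (s - t))) *
          (Real.sqrt (2 / (T - t)) *
            (Real.sin (((m + 1 : ℕ) : ℝ) * (2 * π / (T - t)) * (s - t))
              / (((m + 1 : ℕ) : ℝ) * (2 * π / (T - t)))))
        = (Real.sqrt (2 / (T - t)) * Real.sqrt (2 / (T - t))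
              / (((m + 1 : ℕ) : ℝ) * (2 * π / (T - t)))) *
            (Real.sin (((n + 1 : ℕ) : ℝ) * (2 * π / (T - t)) * (s - t)) *
              Real.sin (((m + 1 : ℕ) : ℝ) * (2 * π / (T - t)) * (s - t))) := by
      intro s; ring
    simp_rw [key]
    rw [intervalIntegral.integral_const_mul,
      ISSn hT (Nat.succ_ne_zero n) (Nat.succ_ne_zero m), sq]
    by_cases h : m = n
    · subst h
      rw [if_pos rfl, if_pos rfl]
      have h1 : ((m + 1 : ℕ) : ℝ) ≠ 0 := Nat.cast_ne_zero.mpr (Nat.succ_ne_zero m)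
      have h2 : T - t ≠ 0 := ne_of_gt hL
      field_simp
    · rw [if_neg (fun c => h (Nat.succ_injective c).symm), if_neg h]
      ring
  rw [E1even hT m, e3, zero_mul, zero_sub]
  by_cases h : m = n
  · rw [if_pos h, if_pos h]
    have h1 : ((m + 1 : ℕ) : ℝ) ≠ 0 := Nat.cast_ne_zero.mpr (Nat.succ_ne_zero m)
    have h2 : T - t ≠ 0 := ne_of_gt hL
    have h3 : π ≠ 0 := ne_of_gt hpi
    field_simp
    ring
  · rw [if_neg h, if_neg h]
    norm_num

/-- fold of sqrt normalizations -/
lemma sqrt_fold {L : ℝ} (hL : 0 < L) : 1 / Real.sqrt L * Real.sqrt (2 / L) = Real.sqrt 2 / L := by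
  rw [Real.sqrt_div (by norm_num) L]
  field_simp; rw [Real.sq_sqrt hL.le]

lemma sqrt_fold2 {L : ℝ} (hL : 0 < L) : 1 / Real.sqrt L * (1 / Real.sqrt L) = 1 / L := by
  rw [div_mul_div_comm, one_mul, Real.mul_self_sqrt hL.le]

/-- C4 (odd m, 0). -/
lemma V_o0 (hT : t < T) (m : ℕ) :
    C4 t T (trigSys t T) (2 * m + 1) 0 0 (2 * m + 1)
      = -(T - t) ^ 2 / (4 * π ^ 2 * ((m + 1 : ℕ) : ℝ) ^ 2) := by
  have hL : (0 : ℝ) < T - t := sub_pos.mpr hT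
  have hLne : T - t ≠ 0 := ne_of_gt hL
  have hpi := Real.pi_pos
  have h3 : π ≠ 0 := ne_of_gt hpi
  have h1 : ((m + 1 : ℕ) : ℝ) ≠ 0 := Nat.cast_ne_zero.mpr (Nat.succ_ne_zero m)
  simp only [C4]
  rw [J_eq t T _ _ (trigCont _) (trigCont _)]
  have e3 : (∫ s in t..T, trigSys t T 0 s * ∫ u in t..s, trigSys t T (2 * m + 1) u)
      = Real.sqrt 2 / (((m + 1 : ℕ) : ℝ) * (2 * π / (T - t))) := by
    simp_rw [POdd hT m]
    simp only [trig0]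
    have key : ∀ s : ℝ,
        (1 / Real.sqrt (T - t)) *
          (Real.sqrt (2 / (T - t)) *
            ((1 - Real.cos (((m + 1 : ℕ) : ℝ) * (2 * π / (T - t)) * (s - t)))
              / (((m + 1 : ℕ) : ℝ) * (2 * π / (T - t)))))
        = (1 / Real.sqrt (T - t) * Real.sqrt (2 / (T - t))
              / (((m + 1 : ℕ) : ℝ) * (2 * π / (T - t))))
          - (1 / Real.sqrt (T - t) * Real.sqrt (2 / (T - t))
              / (((m + 1 : ℕ) : ℝ) * (2 * π / (T - t)))) *
            Real.cos (((m + 1 : ℕ) : ℝ) * (2 * π / (T - t)) * (s - t)) := by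
      intro s; ring
    simp_rw [key]
    rw [intervalIntegral.integral_sub (ci (by fun_prop)) (ci (by fun_prop)),
      intervalIntegral.integral_const, intervalIntegral.integral_const_mul,
      ICn hT (Nat.succ_ne_zero m), sqrt_fold hL]
    rw [smul_eq_mul, mul_zero, sub_zero]
    field_simp
  rw [E1odd hT m, e3, zero_mul, zero_sub]
  rw [div_pow, Real.sq_sqrt (by norm_num : (0:ℝ) ≤ 2)]
  field_simp
  ring

end ValueCasesA

section ValueCasesB
variable {t T : ℝ}

private lemma E10 (hT : t < T) : (∫ s in t..T, trigSys t T 0 s) = Real.sqrt (T - t) := by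
  have hL : (0 : ℝ) < T - t := sub_pos.mpr hT
  rw [trig0]
  rw [intervalIntegral.integral_const, smul_eq_mul, mul_one_div, Real.div_sqrt]

/-- C4 0 0 0 0 -/
lemma V_00 (hT : t < T) :
    C4 t T (trigSys t T) 0 0 0 0 = (T - t) ^ 2 / 24 := by
  have hL : (0 : ℝ) < T - t := sub_pos.mpr hT
  have hLne : T - t ≠ 0 := ne_of_gt hL
  have hss : Real.sqrt (T - t) * Real.sqrt (T - t) = T - t := Real.mul_self_sqrt hL.le
  have hsL : Real.sqrt (T - t) ≠ 0 := by positivity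
  simp only [C4]
  rw [J_eq t T _ _ (trigCont _) (trigCont _)]
  have e3 : (∫ s in t..T, trigSys t T 0 s * ∫ u in t..s, trigSys t T 0 u) = (T - t) / 2 := by
    simp_rw [P0]
    simp only [trig0]
    have key : ∀ s : ℝ, (1 / Real.sqrt (T - t)) * ((s - t) * (1 / Real.sqrt (T - t)))
        = (1 / Real.sqrt (T - t) * (1 / Real.sqrt (T - t))) * (s - t) := by
      intro s; ring
    simp_rw [key]
    rw [intervalIntegral.integral_const_mul, IY, sqrt_fold2 hL]
    field_simp
  have e4 : (∫ s in t..T, (∫ u in t..s, trigSys t T 0 u) *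
      (trigSys t T 0 s * ∫ u in t..s, trigSys t T 0 u)) = (T - t) * Real.sqrt (T - t) / 3 := by
    simp_rw [P0]
    simp only [trig0]
    have key : ∀ s : ℝ, ((s - t) * (1 / Real.sqrt (T - t))) *
        ((1 / Real.sqrt (T - t)) * ((s - t) * (1 / Real.sqrt (T - t))))
        = ((1 / Real.sqrt (T - t) * (1 / Real.sqrt (T - t))) * (1 / Real.sqrt (T - t)))
            * (s - t) ^ 2 := by
      intro s; ring
    simp_rw [key]
    rw [intervalIntegral.integral_const_mul, IY2, sqrt_fold2 hL]
    generalize hLL : T - t = L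
    have hL0 : (0:ℝ) < L := hLL ▸ hL
    generalize hrr : Real.sqrt L = r
    have hr2 : r * r = L := by rw [← hrr]; exact Real.mul_self_sqrt hL0.le
    have hrne : r ≠ 0 := by rw [← hrr]; exact Real.sqrt_ne_zero'.mpr hL0
    rw [← hr2]
    field_simp
  rw [E10 hT, e3, e4]
  generalize hLL : T - t = L
  have hL0 : (0:ℝ) < L := hLL ▸ hL
  generalize hrr : Real.sqrt L = r
  have hr2 : r * r = L := by rw [← hrr]; exact Real.mul_self_sqrt hL0.le
  have hrne : r ≠ 0 := by rw [← hrr]; exact Real.sqrt_ne_zero'.mpr hL0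
  rw [← hr2]
  field_simp
  ring

/-- C4 0 (odd n) (odd n) 0 -/
lemma V_0o (hT : t < T) (n : ℕ) :
    C4 t T (trigSys t T) 0 (2 * n + 1) (2 * n + 1) 0
      = (T - t) ^ 2 / (8 * π ^ 2 * ((n + 1 : ℕ) : ℝ) ^ 2) := by
  have hL : (0 : ℝ) < T - t := sub_pos.mpr hT
  have hLne : T - t ≠ 0 := ne_of_gt hL
  have hss : Real.sqrt (T - t) * Real.sqrt (T - t) = T - t := Real.mul_self_sqrt hL.le
  have h22 : Real.sqrt 2 * Real.sqrt 2 = 2 := Real.mul_self_sqrt (by norm_num)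
  have hsL : Real.sqrt (T - t) ≠ 0 := by positivity
  have hpi := Real.pi_pos
  have h3 : π ≠ 0 := ne_of_gt hpi
  have h1 : ((n + 1 : ℕ) : ℝ) ≠ 0 := Nat.cast_ne_zero.mpr (Nat.succ_ne_zero n)
  have sq : Real.sqrt (2 / (T - t)) * Real.sqrt (2 / (T - t)) = 2 / (T - t) :=
    Real.mul_self_sqrt (by positivity)
  simp only [C4]
  rw [J_eq t T _ _ (trigCont _) (trigCont _)]
  have e3 : (∫ s in t..T, trigSys t T (2 * n + 1) s * ∫ u in t..s, trigSys t T 0 u)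
      = -(Real.sqrt 2 * (T - t)) / (2 * π * ((n + 1 : ℕ) : ℝ)) := by
    simp_rw [P0]
    simp only [trigOdd]
    have key : ∀ s : ℝ,
        (Real.sqrt (2 / (T - t)) * Real.sin (((n + 1 : ℕ) : ℝ) * (2 * π / (T - t)) * (s - t))) *
          ((s - t) * (1 / Real.sqrt (T - t)))
        = (1 / Real.sqrt (T - t) * Real.sqrt (2 / (T - t))) *
            ((s - t) * Real.sin (((n + 1 : ℕ) : ℝ) * (2 * π / (T - t)) * (s - t))) := by
      intro s; ring
    simp_rw [key]
    rw [intervalIntegral.integral_const_mul, IYSn hT (Nat.succ_ne_zero n), sqrt_fold hL]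
    field_simp
  have e4 : (∫ s in t..T, (∫ u in t..s, trigSys t T (2 * n + 1) u) *
      (trigSys t T (2 * n + 1) s * ∫ u in t..s, trigSys t T 0 u))
      = -(3 * (T - t) * Real.sqrt (T - t)) / (8 * π ^ 2 * ((n + 1 : ℕ) : ℝ) ^ 2) := by
    simp_rw [P0, POdd hT n]
    simp only [trigOdd]
    have key : ∀ s : ℝ,
        (Real.sqrt (2 / (T - t)) *
            ((1 - Real.cos (((n + 1 : ℕ) : ℝ) * (2 * π / (T - t)) * (s - t)))
              / (((n + 1 : ℕ) : ℝ) * (2 * π / (T - t))))) *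
          ((Real.sqrt (2 / (T - t)) *
              Real.sin (((n + 1 : ℕ) : ℝ) * (2 * π / (T - t)) * (s - t))) *
            ((s - t) * (1 / Real.sqrt (T - t))))
        = (Real.sqrt (2 / (T - t)) * Real.sqrt (2 / (T - t)) * (1 / Real.sqrt (T - t))
              / (((n + 1 : ℕ) : ℝ) * (2 * π / (T - t)))) *
            ((s - t) * Real.sin (((n + 1 : ℕ) : ℝ) * (2 * π / (T - t)) * (s - t)))
          - (Real.sqrt (2 / (T - t)) * Real.sqrt (2 / (T - t)) * (1 / Real.sqrt (T - t))
              / (((n + 1 : ℕ) : ℝ) * (2 * π / (T - t))) / 2) *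
            ((s - t) * Real.sin (((2 * (n + 1) : ℕ) : ℝ) * (2 * π / (T - t)) * (s - t))) := by
      intro s
      have h2s : Real.sin (((2 * (n + 1) : ℕ) : ℝ) * (2 * π / (T - t)) * (s - t))
          = 2 * Real.sin (((n + 1 : ℕ) : ℝ) * (2 * π / (T - t)) * (s - t)) *
              Real.cos (((n + 1 : ℕ) : ℝ) * (2 * π / (T - t)) * (s - t)) := by
        rw [← Real.sin_two_mul]
        congr 1
        push_cast
        ring
      rw [h2s]
      ring
    simp_rw [key]
    rw [intervalIntegral.integral_sub (ci (by fun_prop)) (ci (by fun_prop)),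
      intervalIntegral.integral_const_mul, intervalIntegral.integral_const_mul,
      IYSn hT (Nat.succ_ne_zero n), IYSn hT (show 2 * (n + 1) ≠ 0 by omega), sq]
    push_cast
    generalize hLL : T - t = L
    have hL0 : (0:ℝ) < L := hLL ▸ hL
    generalize hrr : Real.sqrt L = r
    have hr2 : r * r = L := by rw [← hrr]; exact Real.mul_self_sqrt hL0.le
    have hrne : r ≠ 0 := by rw [← hrr]; exact Real.sqrt_ne_zero'.mpr hL0
    rw [← hr2]
    field_simp
    ring
  rw [E10 hT, E1odd hT n, e3, e4, zero_mul]
  have h2sq : (-(Real.sqrt 2 * (T - t)) / (2 * π * ((n + 1 : ℕ) : ℝ))) ^ 2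
      = (T - t) ^ 2 / (2 * π ^ 2 * ((n + 1 : ℕ) : ℝ) ^ 2) := by
    rw [div_pow, neg_pow, mul_pow, Real.sq_sqrt (by norm_num : (0:ℝ) ≤ 2)]
    field_simp
  rw [h2sq]
  push_cast
  generalize hLL : T - t = L
  have hL0 : (0:ℝ) < L := hLL ▸ hL
  generalize hrr : Real.sqrt L = r
  have hr2 : r * r = L := by rw [← hrr]; exact Real.mul_self_sqrt hL0.le
  have hrne : r ≠ 0 := by rw [← hrr]; exact Real.sqrt_ne_zero'.mpr hL0
  rw [← hr2]
  field_simp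
  ring

/-- C4 0 (even n) (even n) 0 -/
lemma V_0e (hT : t < T) (n : ℕ) :
    C4 t T (trigSys t T) 0 (2 * n + 2) (2 * n + 2) 0
      = (T - t) ^ 2 / (8 * π ^ 2 * ((n + 1 : ℕ) : ℝ) ^ 2) := by
  have hL : (0 : ℝ) < T - t := sub_pos.mpr hT
  have hLne : T - t ≠ 0 := ne_of_gt hL
  have hss : Real.sqrt (T - t) * Real.sqrt (T - t) = T - t := Real.mul_self_sqrt hL.le
  have hsL : Real.sqrt (T - t) ≠ 0 := by positivity
  have hpi := Real.pi_pos
  have h3 : π ≠ 0 := ne_of_gt hpi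
  have h1 : ((n + 1 : ℕ) : ℝ) ≠ 0 := Nat.cast_ne_zero.mpr (Nat.succ_ne_zero n)
  have sq : Real.sqrt (2 / (T - t)) * Real.sqrt (2 / (T - t)) = 2 / (T - t) :=
    Real.mul_self_sqrt (by positivity)
  simp only [C4]
  rw [J_eq t T _ _ (trigCont _) (trigCont _)]
  have e3 : (∫ s in t..T, trigSys t T (2 * n + 2) s * ∫ u in t..s, trigSys t T 0 u) = 0 := by
    simp_rw [P0]
    simp only [trigEven]
    have key : ∀ s : ℝ,
        (Real.sqrt (2 / (T - t)) * Real.cos (((n + 1 : ℕ) : ℝ) * (2 * π / (T - t)) * (s - t))) *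
          ((s - t) * (1 / Real.sqrt (T - t)))
        = (1 / Real.sqrt (T - t) * Real.sqrt (2 / (T - t))) *
            ((s - t) * Real.cos (((n + 1 : ℕ) : ℝ) * (2 * π / (T - t)) * (s - t))) := by
      intro s; ring
    simp_rw [key]
    rw [intervalIntegral.integral_const_mul, IYCn hT (Nat.succ_ne_zero n), mul_zero]
  have e4 : (∫ s in t..T, (∫ u in t..s, trigSys t T (2 * n + 2) u) *
      (trigSys t T (2 * n + 2) s * ∫ u in t..s, trigSys t T 0 u))
      = -((T - t) * Real.sqrt (T - t)) / (8 * π ^ 2 * ((n + 1 : ℕ) : ℝ) ^ 2) := by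
    simp_rw [P0, PEven hT n]
    simp only [trigEven]
    have key : ∀ s : ℝ,
        (Real.sqrt (2 / (T - t)) *
            (Real.sin (((n + 1 : ℕ) : ℝ) * (2 * π / (T - t)) * (s - t))
              / (((n + 1 : ℕ) : ℝ) * (2 * π / (T - t))))) *
          ((Real.sqrt (2 / (T - t)) *
              Real.cos (((n + 1 : ℕ) : ℝ) * (2 * π / (T - t)) * (s - t))) *
            ((s - t) * (1 / Real.sqrt (T - t))))
        = (Real.sqrt (2 / (T - t)) * Real.sqrt (2 / (T - t)) * (1 / Real.sqrt (T - t))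
              / (((n + 1 : ℕ) : ℝ) * (2 * π / (T - t))) / 2) *
            ((s - t) * Real.sin (((2 * (n + 1) : ℕ) : ℝ) * (2 * π / (T - t)) * (s - t))) := by
      intro s
      have h2s : Real.sin (((2 * (n + 1) : ℕ) : ℝ) * (2 * π / (T - t)) * (s - t))
          = 2 * Real.sin (((n + 1 : ℕ) : ℝ) * (2 * π / (T - t)) * (s - t)) *
              Real.cos (((n + 1 : ℕ) : ℝ) * (2 * π / (T - t)) * (s - t)) := by
        rw [← Real.sin_two_mul]
        congr 1
        push_cast
        ring
      rw [h2s]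
      ring
    simp_rw [key]
    rw [intervalIntegral.integral_const_mul,
      IYSn hT (show 2 * (n + 1) ≠ 0 by omega), sq]
    push_cast
    generalize hLL : T - t = L
    have hL0 : (0:ℝ) < L := hLL ▸ hL
    generalize hrr : Real.sqrt L = r
    have hr2 : r * r = L := by rw [← hrr]; exact Real.mul_self_sqrt hL0.le
    have hrne : r ≠ 0 := by rw [← hrr]; exact Real.sqrt_ne_zero'.mpr hL0
    rw [← hr2]
    field_simp
    ring
  rw [E10 hT, E1even hT n, e3, e4]
  push_cast
  generalize hLL : T - t = L
  have hL0 : (0:ℝ) < L := hLL ▸ hL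
  generalize hrr : Real.sqrt L = r
  have hr2 : r * r = L := by rw [← hrr]; exact Real.mul_self_sqrt hL0.le
  have hrne : r ≠ 0 := by rw [← hrr]; exact Real.sqrt_ne_zero'.mpr hL0
  rw [← hr2]
  field_simp
  ring

end ValueCasesB

section Sums
variable {t T : ℝ}

lemma rowOdd (hT : t < T) (m : ℕ) :
    ∑ b ∈ Finset.range (2 * m + 1 + 1), C4 t T (trigSys t T) (2 * m + 1) b b (2 * m + 1)
      = -(T - t) ^ 2 / (4 * π ^ 2 * ((m + 1 : ℕ) : ℝ) ^ 2) := by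
  have h : ∀ b ∈ Finset.range (2 * m + 1 + 1), C4 t T (trigSys t T) (2 * m + 1) b b (2 * m + 1)
      = if b = 0 then -(T - t) ^ 2 / (4 * π ^ 2 * ((m + 1 : ℕ) : ℝ) ^ 2) else 0 := by
    intro b hb
    have hb' := Finset.mem_range.mp hb
    rcases Nat.even_or_odd b with ⟨k, hk⟩ | ⟨k, hk⟩
    · subst hk
      match k with
      | 0 => simpa using V_o0 hT m
      | (j + 1) =>
        rw [show (j + 1) + (j + 1) = 2 * j + 2 from by omega]
        rw [if_neg (by omega), V_oe hT m j, if_neg (by omega)]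
    · subst hk
      rw [if_neg (by omega), Z_oo hT m k]
  rw [Finset.sum_congr rfl h, Finset.sum_ite_eq' (Finset.range (2 * m + 1 + 1)) 0
    (fun _ => -(T - t) ^ 2 / (4 * π ^ 2 * ((m + 1 : ℕ) : ℝ) ^ 2)),
    if_pos (Finset.mem_range.mpr (by omega))]

lemma rowEven (hT : t < T) (m : ℕ) :
    ∑ b ∈ Finset.range (2 * m + 2 + 1), C4 t T (trigSys t T) (2 * m + 2) b b (2 * m + 2)
      = -(T - t) ^ 2 / (8 * π ^ 2 * ((m + 1 : ℕ) : ℝ) ^ 2) := by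
  have h : ∀ b ∈ Finset.range (2 * m + 2 + 1), C4 t T (trigSys t T) (2 * m + 2) b b (2 * m + 2)
      = if b = 2 * m + 1 then -(T - t) ^ 2 / (8 * π ^ 2 * ((m + 1 : ℕ) : ℝ) ^ 2) else 0 := by
    intro b hb
    rcases Nat.even_or_odd b with ⟨k, hk⟩ | ⟨k, hk⟩
    · subst hk
      match k with
      | 0 => rw [if_neg (by omega)]; simpa using Z_e0 hT m
      | (j + 1) =>
        rw [show (j + 1) + (j + 1) = 2 * j + 2 from by omega]
        rw [if_neg (by omega), Z_ee hT m j]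
    · subst hk
      by_cases hkm : k = m
      · rw [← hkm]
        rw [if_pos rfl, V_eo hT k k, if_pos rfl]
      · rw [if_neg (by omega), V_eo hT m k, if_neg (fun c => hkm c.symm)]
  rw [Finset.sum_congr rfl h, Finset.sum_ite_eq' (Finset.range (2 * m + 2 + 1)) (2 * m + 1)
    (fun _ => -(T - t) ^ 2 / (8 * π ^ 2 * ((m + 1 : ℕ) : ℝ) ^ 2)),
    if_pos (Finset.mem_range.mpr (by omega))]

lemma colOdd (hT : t < T) (m : ℕ) :
    ∑ a ∈ Finset.range (2 * m + 1), C4 t T (trigSys t T) a (2 * m + 1) (2 * m + 1) a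
      = (T - t) ^ 2 / (8 * π ^ 2 * ((m + 1 : ℕ) : ℝ) ^ 2) := by
  have h : ∀ a ∈ Finset.range (2 * m + 1), C4 t T (trigSys t T) a (2 * m + 1) (2 * m + 1) a
      = if a = 0 then (T - t) ^ 2 / (8 * π ^ 2 * ((m + 1 : ℕ) : ℝ) ^ 2) else 0 := by
    intro a ha
    have ha' := Finset.mem_range.mp ha
    rcases Nat.even_or_odd a with ⟨k, hk⟩ | ⟨k, hk⟩
    · subst hk
      match k with
      | 0 => simpa using V_0o hT m
      | (j + 1) =>
        rw [show (j + 1) + (j + 1) = 2 * j + 2 from by omega]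
        rw [if_neg (by omega), V_eo hT j m, if_neg (by omega)]
    · subst hk
      rw [if_neg (by omega), Z_oo hT k m]
  rw [Finset.sum_congr rfl h, Finset.sum_ite_eq' (Finset.range (2 * m + 1)) 0
    (fun _ => (T - t) ^ 2 / (8 * π ^ 2 * ((m + 1 : ℕ) : ℝ) ^ 2)),
    if_pos (Finset.mem_range.mpr (by omega))]

lemma colEven (hT : t < T) (m : ℕ) :
    ∑ a ∈ Finset.range (2 * m + 2), C4 t T (trigSys t T) a (2 * m + 2) (2 * m + 2) a = 0 := by
  have h : ∀ a ∈ Finset.range (2 * m + 2), C4 t T (trigSys t T) a (2 * m + 2) (2 * m + 2) a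
      = (if a = 0 then (T - t) ^ 2 / (8 * π ^ 2 * ((m + 1 : ℕ) : ℝ) ^ 2) else 0)
        + (if a = 2 * m + 1 then -((T - t) ^ 2 / (8 * π ^ 2 * ((m + 1 : ℕ) : ℝ) ^ 2)) else 0) := by
    intro a ha
    have ha' := Finset.mem_range.mp ha
    rcases Nat.even_or_odd a with ⟨k, hk⟩ | ⟨k, hk⟩
    · subst hk
      match k with
      | 0 =>
        rw [if_pos (show (0 + 0 : ℕ) = 0 from rfl), if_neg (show ¬((0 + 0 : ℕ) = 2 * m + 1) from by omega)]
        exact (V_0e hT m).trans (add_zero _).symm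
      | (j + 1) =>
        rw [show (j + 1) + (j + 1) = 2 * j + 2 from by omega]
        rw [if_neg (by omega), if_neg (by omega), Z_ee hT j m]
        norm_num
    · subst hk
      by_cases hkm : k = m
      · rw [← hkm]
        rw [if_neg (by omega), if_pos rfl, V_oe hT k k, if_pos rfl]
        ring
      · rw [if_neg (by omega), if_neg (by omega), V_oe hT k m, if_neg hkm]
        norm_num
  rw [Finset.sum_congr rfl h, Finset.sum_add_distrib,
    Finset.sum_ite_eq' (Finset.range (2 * m + 2)) 0
      (fun _ => (T - t) ^ 2 / (8 * π ^ 2 * ((m + 1 : ℕ) : ℝ) ^ 2)),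
    Finset.sum_ite_eq' (Finset.range (2 * m + 2)) (2 * m + 1)
      (fun _ => -((T - t) ^ 2 / (8 * π ^ 2 * ((m + 1 : ℕ) : ℝ) ^ 2))),
    if_pos (Finset.mem_range.mpr (by omega)), if_pos (Finset.mem_range.mpr (by omega))]
  ring

end Sums

noncomputable def auxD (t T : ℝ) (q : ℕ) : ℝ :=
  if q = 0 then 0 else (T - t) ^ 2 / (8 * π ^ 2 * (((q + 1) / 2 : ℕ) : ℝ) ^ 2)

lemma Ssum {t T : ℝ} (hT : t < T) : ∀ p : ℕ,
    (∑ a ∈ Finset.range (p + 1), ∑ b ∈ Finset.range (p + 1),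
        C4 t T (trigSys t T) a b b a)
      = (T - t) ^ 2 / 24 - ∑ q ∈ Finset.range (p + 1), auxD t T q := by
  intro p
  induction p with
  | zero => simp [V_00 hT, auxD]
  | succ p ih =>
    have step : (∑ a ∈ Finset.range (p + 1 + 1), ∑ b ∈ Finset.range (p + 1 + 1),
          C4 t T (trigSys t T) a b b a)
        = (∑ a ∈ Finset.range (p + 1), ∑ b ∈ Finset.range (p + 1),
            C4 t T (trigSys t T) a b b a)
          + (∑ a ∈ Finset.range (p + 1), C4 t T (trigSys t T) a (p + 1) (p + 1) a)
          + (∑ b ∈ Finset.range (p + 1 + 1), C4 t T (trigSys t T) (p + 1) b b (p + 1)) := by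
      rw [Finset.sum_range_succ]
      congr 1
      rw [← Finset.sum_add_distrib]
      apply Finset.sum_congr rfl
      intro a _
      rw [Finset.sum_range_succ]
    rw [step, ih, Finset.sum_range_succ (f := auxD t T) (n := p + 1)]
    have hq : auxD t T (p + 1)
        = (T - t) ^ 2 / (8 * π ^ 2 * (((p + 1 + 1) / 2 : ℕ) : ℝ) ^ 2) := by
      simp only [auxD]
      rw [if_neg (by omega)]
    rcases Nat.even_or_odd (p + 1) with ⟨k, hk⟩ | ⟨k, hk⟩
    · -- p + 1 = k + k, k ≥ 1
      match k, hk with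
      | (j + 1), hk =>
        have hk' : p + 1 = 2 * j + 2 := by omega
        have hdiv : (p + 1 + 1) / 2 = j + 1 := by omega
        rw [hq, hdiv]
        rw [show ∑ a ∈ Finset.range (p + 1), C4 t T (trigSys t T) a (p + 1) (p + 1) a
            = ∑ a ∈ Finset.range (2 * j + 2), C4 t T (trigSys t T) a (2 * j + 2) (2 * j + 2) a
            from by rw [hk'],
          show ∑ b ∈ Finset.range (p + 1 + 1), C4 t T (trigSys t T) (p + 1) b b (p + 1)
            = ∑ b ∈ Finset.range (2 * j + 2 + 1),
                C4 t T (trigSys t T) (2 * j + 2) b b (2 * j + 2) from by rw [hk'],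
          colEven hT j, rowEven hT j]
        ring
    · -- p + 1 = 2k + 1
      have hdiv : (p + 1 + 1) / 2 = k + 1 := by omega
      have hk' : p + 1 = 2 * k + 1 := hk
      rw [hq, hdiv]
      rw [show ∑ a ∈ Finset.range (p + 1), C4 t T (trigSys t T) a (p + 1) (p + 1) a
          = ∑ a ∈ Finset.range (2 * k + 1), C4 t T (trigSys t T) a (2 * k + 1) (2 * k + 1) a
          from by rw [hk'],
        show ∑ b ∈ Finset.range (p + 1 + 1), C4 t T (trigSys t T) (p + 1) b b (p + 1)
          = ∑ b ∈ Finset.range (2 * k + 1 + 1),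
              C4 t T (trigSys t T) (2 * k + 1) b b (2 * k + 1) from by rw [hk'],
        colOdd hT k, rowOdd hT k]
      ring

noncomputable def auxE (q : ℕ) : ℝ :=
  if q = 0 then 0 else 1 / (((q + 1) / 2 : ℕ) : ℝ) ^ 2

lemma auxE_even : (fun k => auxE (2 * k)) = (fun n : ℕ => 1 / (n : ℝ) ^ 2) := by
  funext k
  match k with
  | 0 => simp [auxE]
  | (j + 1) =>
    have h2 : ¬(2 * (j + 1) = 0) := by omega
    have hd : (2 * (j + 1) + 1) / 2 = j + 1 := by omega
    simp only [auxE, if_neg h2, hd]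

lemma auxE_odd : (fun k => auxE (2 * k + 1)) = (fun n : ℕ => 1 / ((n + 1 : ℕ) : ℝ) ^ 2) := by
  funext k
  have h2 : ¬(2 * k + 1 = 0) := by omega
  have hd : (2 * k + 1 + 1) / 2 = k + 1 := by omega
  simp only [auxE, if_neg h2, hd]

set_option maxHeartbeats 1000000 in
lemma hasSum_auxE : HasSum auxE (π ^ 2 / 3) := by
  have hzeta := hasSum_zeta_two
  have h1 : HasSum (fun k => auxE (2 * k)) (π ^ 2 / 6) := by rw [auxE_even]; exact hzeta
  have hshift : HasSum (fun n : ℕ => 1 / ((n + 1 : ℕ) : ℝ) ^ 2) (π ^ 2 / 6) := by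
    apply (hasSum_nat_add_iff (f := fun n : ℕ => 1 / (n : ℝ) ^ 2) 1).mpr
    simpa using hzeta
  have h2 : HasSum (fun k => auxE (2 * k + 1)) (π ^ 2 / 6) := by rw [auxE_odd]; exact hshift
  have h := HasSum.even_add_odd h1 h2
  rw [show π ^ 2 / 6 + π ^ 2 / 6 = π ^ 2 / 3 by ring] at h
  exact h

set_option maxHeartbeats 1000000 in
lemma hasSum_auxD {t T : ℝ} (hT : t < T) : HasSum (auxD t T) ((T - t) ^ 2 / 24) := by
  have hpi := Real.pi_pos
  have h3 : π ≠ 0 := ne_of_gt hpi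
  have hDe : auxD t T = fun q => ((T - t) ^ 2 / (8 * π ^ 2)) * auxE q := by
    funext q
    simp only [auxD, auxE]
    split_ifs with h
    · ring
    · ring
  rw [hDe]
  have h := hasSum_auxE.mul_left ((T - t) ^ 2 / (8 * π ^ 2))
  rw [show (T - t) ^ 2 / (8 * π ^ 2) * (π ^ 2 / 3) = (T - t) ^ 2 / 24 from by
    field_simp; ring] at h
  exact h

theorem stmt16 (t T : ℝ) (hT : t < T) :
    Tendsto (fun p : ℕ => ∑ a ∈ Finset.range (p + 1), ∑ b ∈ Finset.range (p + 1),
      C4 t T (trigSys t T) a b b a)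
      atTop (nhds (0)) := by
  have hfun : (fun p : ℕ => ∑ a ∈ Finset.range (p + 1), ∑ b ∈ Finset.range (p + 1),
      C4 t T (trigSys t T) a b b a)
      = fun p : ℕ => (T - t) ^ 2 / 24 - ∑ q ∈ Finset.range (p + 1), auxD t T q :=
    funext (Ssum hT)
  rw [hfun]
  have h1 : Tendsto (fun p : ℕ => ∑ q ∈ Finset.range (p + 1), auxD t T q) atTop
      (nhds ((T - t) ^ 2 / 24)) := by
    have h := (hasSum_auxD hT).tendsto_sum_nat
    exact h.comp (tendsto_add_atTop_nat 1)
  have h2 : Tendsto (fun p : ℕ => (T - t) ^ 2 / 24 - ∑ q ∈ Finset.range (p + 1), auxD t T q)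
      atTop (nhds ((T - t) ^ 2 / 24 - (T - t) ^ 2 / 24)) :=
    Tendsto.sub tendsto_const_nhds h1
  simpa using h2
end
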